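/- arXiv:2307.04267 — 6 statements merged into one kernel-verified Lean document; each statement's English description precedes it below -/
import Mathlib

section
/- For two adjacent sites i and j, the following operator identity holds on (ℂ²)^{⊗4} ⊗ (ℂ²)^{⊗4}: Σ_{a,b=1}^{4} (-1)^{a+b} (Σ_{α∈{x,y,z}} τ_{i,a}^α τ_{i,b}^α)(Σ_{β∈{x,y,z}} τ_{j,a}^β τ_{j,b}^β) = Σ_{α,β∈{x,y,z}} ( Σ_{a=1}^{4} (-1)^{a} τ_{i,a}^α τ_{j,a}^β )², so that each local term of the effective Hamiltonian is a sum of squares of Hermitian operators. -/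
/-! STATEMENT 1: the two-site local term of the effective Hamiltonian is a sum of squares of Hermitian operators. -/

open Matrix Finset

noncomputable section

/-- The Pauli matrices σ^x, σ^y, σ^z. -/
def pauli : Fin 3 → Matrix (Fin 2) (Fin 2) ℂ
  | 0 => !![0, 1; 1, 0]
  | 1 => !![0, -Complex.I; Complex.I, 0]
  | 2 => !![1, 0; 0, -1]

/-- The single-contour matrix: the Pauli matrix `σ^α` on forward contours `a = 1, 3`
(indices `0, 2`), and its entrywise complex conjugate `(σ^α)^*` on backward contours
`a = 2, 4` (indices `1, 3`). -/
def pauliC (a : Fin 4) (α : Fin 3) : Matrix (Fin 2) (Fin 2) ℂ :=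
  if a = 0 ∨ a = 2 then pauli α else (pauli α).map (starRingEnd ℂ)

/-- Basis of the replica Hilbert space ((ℂ²)^{⊗4})^{⊗N}: a site index `i : Fin N` and a
contour index `a : Fin 4` give a qubit. -/
abbrev RepIdx (N : ℕ) := Fin N → Fin 4 → Fin 2

/-- `τ_{i,a}^α`: acts as `pauliC a α` on contour `a` of site `i`, identity elsewhere. -/
def tau (N : ℕ) (i : Fin N) (a : Fin 4) (α : Fin 3) :
    Matrix (RepIdx N) (RepIdx N) ℂ :=
  Matrix.of fun f g =>
    pauliC a α (f i a) (g i a) *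
      ∏ p ∈ (univ : Finset (Fin N × Fin 4)).erase (i, a),
        if f p.1 p.2 = g p.1 p.2 then (1 : ℂ) else 0

/-- The effective Hamiltonian
`H_eff = (J/2) Σ_{i=1}^{N-1} Σ_{a,b} (-1)^{a+b} (Σ_α τ_{i,a}^α τ_{i,b}^α)(Σ_β τ_{i+1,a}^β τ_{i+1,b}^β)`
on the open chain of `N` sites. -/
def Heff (N : ℕ) (J : ℝ) : Matrix (RepIdx N) (RepIdx N) ℂ :=
  ((J : ℂ) / 2) • ∑ i : Fin N,
    if h : (i : ℕ) + 1 < N then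
      ∑ a : Fin 4, ∑ b : Fin 4, ((-1 : ℂ) ^ ((a : ℕ) + (b : ℕ))) •
        ((∑ α : Fin 3, tau N i a α * tau N i b α) *
         (∑ β : Fin 3, tau N ⟨(i : ℕ) + 1, h⟩ a β * tau N ⟨(i : ℕ) + 1, h⟩ b β))
    else 0

/-- The single-site state |id⟩⟩ = ½(|0000⟩+|0011⟩+|1100⟩+|1111⟩). -/
def idS : (Fin 4 → Fin 2) → ℂ := fun f => if f 0 = f 1 ∧ f 2 = f 3 then 1 / 2 else 0

/-- The single-site state |swap⟩⟩ = ½(|0000⟩+|1001⟩+|0110⟩+|1111⟩). -/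
def swapS : (Fin 4 → Fin 2) → ℂ := fun f => if f 0 = f 3 ∧ f 1 = f 2 then 1 / 2 else 0

/-- The product state |id⟩⟩^{⊗N}. -/
def idN (N : ℕ) : RepIdx N → ℂ := fun f => ∏ i : Fin N, idS (f i)

/-- The product state |swap⟩⟩^{⊗N}. -/
def swapN (N : ℕ) : RepIdx N → ℂ := fun f => ∏ i : Fin N, swapS (f i)

/-! ### Auxiliary lemmas -/

lemma pauli_herm (α : Fin 3) : (pauli α).IsHermitian := by
  fin_cases α <;>
  · ext x y
    fin_cases x <;> fin_cases y <;>
      simp [pauli, Matrix.conjTranspose_apply]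

lemma pauliC_herm (a : Fin 4) (α : Fin 3) : (pauliC a α).IsHermitian := by
  unfold pauliC
  split
  · exact pauli_herm α
  · ext x y
    have h : star (pauli α y x) = pauli α x y := by
      simpa [Matrix.conjTranspose_apply] using
        congrFun (congrFun (pauli_herm α) x) y
    simp only [Matrix.conjTranspose_apply, Matrix.map_apply, RingHom.star_def,
      Complex.star_def] at h ⊢
    rw [← h]

lemma tau_herm (N : ℕ) (i : Fin N) (a : Fin 4) (α : Fin 3) :
    (tau N i a α).IsHermitian := by
  ext f g
  simp only [tau, Matrix.conjTranspose_apply, Matrix.of_apply, star_mul']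
  congr 1
  · simpa [Matrix.conjTranspose_apply] using
      congrFun (congrFun (pauliC_herm a α) (f i a)) (g i a)
  · rw [star_prod]
    refine Finset.prod_congr rfl fun p _ => ?_
    by_cases h : f p.1 p.2 = g p.1 p.2
    · rw [if_pos h.symm, if_pos h, star_one]
    · rw [if_neg (fun e => h e.symm), if_neg h, star_zero]

def upd {N : ℕ} (f : RepIdx N) (i : Fin N) (a : Fin 4) (v : Fin 2) : RepIdx N :=
  fun i' a' => if i' = i ∧ a' = a then v else f i' a'

lemma tau_mul_apply {N : ℕ} {i j : Fin N} {a b : Fin 4}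
    (hq : (i, a) ≠ (j, b)) (α β : Fin 3) (f g : RepIdx N) :
    (tau N i a α * tau N j b β) f g =
      pauliC a α (f i a) (g i a) * pauliC b β (f j b) (g j b) *
      ∏ p ∈ (((univ : Finset (Fin N × Fin 4)).erase (i, a)).erase (j, b)),
        if f p.1 p.2 = g p.1 p.2 then (1 : ℂ) else 0 := by
  have hne : ¬(j = i ∧ b = a) := by
    rintro ⟨rfl, rfl⟩; exact hq rfl
  rw [Matrix.mul_apply]
  simp only [tau, Matrix.of_apply, Finset.prod_boole]
  refine (Finset.sum_eq_single (upd f i a (g i a)) ?_ ?_).trans ?_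
  · intro h _ hneq
    by_cases H1 : ∀ p ∈ (univ : Finset (Fin N × Fin 4)).erase (i, a),
        f p.1 p.2 = h p.1 p.2
    · by_cases H2 : ∀ p ∈ (univ : Finset (Fin N × Fin 4)).erase (j, b),
          h p.1 p.2 = g p.1 p.2
      · exfalso
        apply hneq
        funext i' a'
        unfold upd
        by_cases hp : i' = i ∧ a' = a
        · obtain ⟨rfl, rfl⟩ := hp
          rw [if_pos ⟨rfl, rfl⟩]
          exact H2 (i', a') (Finset.mem_erase.mpr ⟨by simpa using hq, Finset.mem_univ _⟩)
        · rw [if_neg hp]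
          refine (H1 (i', a') ?_).symm
          exact Finset.mem_erase.mpr ⟨fun e => hp ⟨congrArg Prod.fst e, congrArg Prod.snd e⟩,
            Finset.mem_univ _⟩
      · rw [if_neg H2]; ring
    · rw [if_neg H1]; ring
  · intro hmem
    exact absurd (Finset.mem_univ _) hmem
  · -- value at upd f i a (g i a)
    have e1 : upd f i a (g i a) i a = g i a := by simp [upd]
    have e2 : upd f i a (g i a) j b = f j b := by simp [upd, hne]
    have c1 : ∀ p ∈ (univ : Finset (Fin N × Fin 4)).erase (i, a),
        f p.1 p.2 = upd f i a (g i a) p.1 p.2 := by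
      intro p hp
      have hp' := (Finset.mem_erase.mp hp).1
      have : ¬(p.1 = i ∧ p.2 = a) := fun ⟨h1, h2⟩ => hp' (Prod.ext h1 h2)
      simp [upd, this]
    rw [e1, e2, if_pos c1]
    have c2 : (∀ p ∈ (univ : Finset (Fin N × Fin 4)).erase (j, b),
          upd f i a (g i a) p.1 p.2 = g p.1 p.2) ↔
        ∀ p ∈ (((univ : Finset (Fin N × Fin 4)).erase (i, a)).erase (j, b)),
          f p.1 p.2 = g p.1 p.2 := by
      constructor
      · intro H p hp
        have hp2 := Finset.mem_erase.mp hp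
        have hp1 := (Finset.mem_erase.mp hp2.2).1
        have hmem : p ∈ (univ : Finset (Fin N × Fin 4)).erase (j, b) :=
          Finset.mem_erase.mpr ⟨hp2.1, Finset.mem_univ _⟩
        have := H p hmem
        have hnp : ¬(p.1 = i ∧ p.2 = a) := fun ⟨h1, h2⟩ => hp1 (Prod.ext h1 h2)
        rwa [show upd f i a (g i a) p.1 p.2 = f p.1 p.2 by simp [upd, hnp]] at this
      · intro H p hp
        have hp1 := (Finset.mem_erase.mp hp).1
        by_cases hpq : p.1 = i ∧ p.2 = a
        · obtain ⟨h1, h2⟩ := hpq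
          simp only [upd, h1, h2, and_self, if_pos]
        · rw [show upd f i a (g i a) p.1 p.2 = f p.1 p.2 by simp [upd, hpq]]
          exact H p (Finset.mem_erase.mpr ⟨hp1, Finset.mem_erase.mpr
            ⟨fun e => hpq ⟨congrArg Prod.fst e, congrArg Prod.snd e⟩, Finset.mem_univ _⟩⟩)
    simp only [c2]
    ring

lemma tau_comm {N : ℕ} {i j : Fin N} {a b : Fin 4}
    (hq : (i, a) ≠ (j, b)) (α β : Fin 3) :
    tau N i a α * tau N j b β = tau N j b β * tau N i a α := by
  ext f g
  rw [tau_mul_apply hq, tau_mul_apply (Ne.symm hq), Finset.erase_right_comm]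
  ring

lemma swap3 {M : Type*} [AddCommMonoid M] {ι₁ ι₂ ι₃ : Type*}
    [Fintype ι₁] [Fintype ι₂] [Fintype ι₃] (G : ι₁ → ι₂ → ι₃ → M) :
    ∑ b : ι₁, ∑ x : ι₂, ∑ y : ι₃, G b x y = ∑ x : ι₂, ∑ y : ι₃, ∑ b : ι₁, G b x y := by
  rw [Finset.sum_comm]
  exact Finset.sum_congr rfl fun x _ => Finset.sum_comm

lemma sign_eq (m n : ℕ) : ((-1 : ℂ)) ^ (m + 1) * (-1) ^ (n + 1) = (-1) ^ (m + n) := by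
  rw [pow_succ, pow_succ, pow_add]
  ring


/-- on `(ℂ²)^{⊗4} ⊗ (ℂ²)^{⊗4}` (two sites `i = 0`, `j = 1`, four contours each),
`Σ_{a,b} (-1)^{a+b} (Σ_α τ_{i,a}^α τ_{i,b}^α)(Σ_β τ_{j,a}^β τ_{j,b}^β)
  = Σ_{α,β} (Σ_a (-1)^a τ_{i,a}^α τ_{j,a}^β)²`,
and each operator `Σ_a (-1)^a τ_{i,a}^α τ_{j,a}^β` being squared is Hermitian.
(Contours `a = 1,2,3,4` are indexed by `Fin 4`, so `(-1)^a = (-1)^{(a:ℕ)+1}`.) -/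
theorem stmt1 :
    (∑ a : Fin 4, ∑ b : Fin 4, ((-1 : ℂ) ^ ((a : ℕ) + (b : ℕ))) •
        ((∑ α : Fin 3, tau 2 0 a α * tau 2 0 b α) *
         (∑ β : Fin 3, tau 2 1 a β * tau 2 1 b β)) =
      ∑ α : Fin 3, ∑ β : Fin 3,
        (∑ a : Fin 4, ((-1 : ℂ) ^ ((a : ℕ) + 1)) • (tau 2 0 a α * tau 2 1 a β)) ^ 2) ∧
    ∀ α β : Fin 3,
      (∑ a : Fin 4, ((-1 : ℂ) ^ ((a : ℕ) + 1)) • (tau 2 0 a α * tau 2 1 a β)).IsHermitian := by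
  have hcomm : ∀ (a b : Fin 4) (α β : Fin 3),
      tau 2 0 b α * tau 2 1 a β = tau 2 1 a β * tau 2 0 b α :=
    fun a b α β => tau_comm (by simp) α β
  constructor
  · have key : ∀ (a b : Fin 4) (α β : Fin 3),
        (tau 2 0 a α * tau 2 0 b α) * (tau 2 1 a β * tau 2 1 b β) =
        (tau 2 0 a α * tau 2 1 a β) * (tau 2 0 b α * tau 2 1 b β) := by
      intro a b α β
      rw [mul_assoc, ← mul_assoc (tau 2 0 b α), hcomm a b α β,
        mul_assoc, ← mul_assoc, ← mul_assoc]
    calc ∑ a : Fin 4, ∑ b : Fin 4, ((-1 : ℂ) ^ ((a : ℕ) + (b : ℕ))) •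
          ((∑ α : Fin 3, tau 2 0 a α * tau 2 0 b α) *
           (∑ β : Fin 3, tau 2 1 a β * tau 2 1 b β))
        = ∑ a : Fin 4, ∑ b : Fin 4, ∑ α : Fin 3, ∑ β : Fin 3,
            ((-1 : ℂ) ^ ((a : ℕ) + (b : ℕ))) •
              ((tau 2 0 a α * tau 2 0 b α) * (tau 2 1 a β * tau 2 1 b β)) := by
          simp only [Finset.sum_mul_sum, Finset.smul_sum]
      _ = ∑ a : Fin 4, ∑ b : Fin 4, ∑ α : Fin 3, ∑ β : Fin 3,
            (((-1 : ℂ) ^ ((a : ℕ) + 1)) * ((-1 : ℂ) ^ ((b : ℕ) + 1))) •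
              ((tau 2 0 a α * tau 2 1 a β) * (tau 2 0 b α * tau 2 1 b β)) := by
          refine Finset.sum_congr rfl fun a _ => Finset.sum_congr rfl fun b _ =>
            Finset.sum_congr rfl fun α _ => Finset.sum_congr rfl fun β _ => ?_
          rw [key a b α β, sign_eq]
      _ = ∑ α : Fin 3, ∑ β : Fin 3, ∑ a : Fin 4, ∑ b : Fin 4,
            (((-1 : ℂ) ^ ((a : ℕ) + 1)) * ((-1 : ℂ) ^ ((b : ℕ) + 1))) •
              ((tau 2 0 a α * tau 2 1 a β) * (tau 2 0 b α * tau 2 1 b β)) := by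
          rw [show (∑ a : Fin 4, ∑ b : Fin 4, ∑ α : Fin 3, ∑ β : Fin 3,
              (((-1 : ℂ) ^ ((a : ℕ) + 1)) * ((-1 : ℂ) ^ ((b : ℕ) + 1))) •
                ((tau 2 0 a α * tau 2 1 a β) * (tau 2 0 b α * tau 2 1 b β))) =
              ∑ a : Fin 4, ∑ α : Fin 3, ∑ β : Fin 3, ∑ b : Fin 4,
              (((-1 : ℂ) ^ ((a : ℕ) + 1)) * ((-1 : ℂ) ^ ((b : ℕ) + 1))) •
                ((tau 2 0 a α * tau 2 1 a β) * (tau 2 0 b α * tau 2 1 b β))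
            from Finset.sum_congr rfl fun a _ => swap3 _]
          exact swap3 _
      _ = ∑ α : Fin 3, ∑ β : Fin 3,
            (∑ a : Fin 4, ((-1 : ℂ) ^ ((a : ℕ) + 1)) • (tau 2 0 a α * tau 2 1 a β)) ^ 2 := by
          refine Finset.sum_congr rfl fun α _ => Finset.sum_congr rfl fun β _ => ?_
          rw [sq, Finset.sum_mul_sum]
          refine Finset.sum_congr rfl fun a _ => Finset.sum_congr rfl fun b _ => ?_
          rw [smul_mul_assoc, mul_smul_comm, smul_smul]
  · intro α β
    unfold Matrix.IsHermitian
    rw [Matrix.conjTranspose_sum]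
    refine Finset.sum_congr rfl fun a _ => ?_
    rw [Matrix.conjTranspose_smul, Matrix.conjTranspose_mul,
      tau_herm 2 1 a β, tau_herm 2 0 a α, ← hcomm a a α β]
    congr 1
    simp


end
end

section
/- The effective Hamiltonian H_eff is a positive semidefinite Hermitian operator: for every vector ψ in the total Hilbert space ((ℂ²)^{⊗4})^{⊗N}, the inner product ⟨ψ, H_eff ψ⟩ is real and nonnegative. -/
/-! STATEMENT 2: H_eff is positive semidefinite Hermitian: for every ψ, ⟨ψ, H_eff ψ⟩ is real and nonnegative. -/

open Matrix Finset

noncomputable section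

namespace Aux

variable {N : ℕ}

/-- Tensor product of a family of one-qubit matrices. -/
def kron (N : ℕ) (P : Fin N × Fin 4 → Matrix (Fin 2) (Fin 2) ℂ) :
    Matrix (RepIdx N) (RepIdx N) ℂ :=
  Matrix.of fun f g => ∏ p : Fin N × Fin 4, P p (f p.1 p.2) (g p.1 p.2)

lemma kron_mul (P Q : Fin N × Fin 4 → Matrix (Fin 2) (Fin 2) ℂ) :
    kron N P * kron N Q = kron N (fun p => P p * Q p) := by
  ext f g
  simp only [kron, Matrix.mul_apply, Matrix.of_apply, Matrix.mul_apply]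
  rw [← Equiv.sum_comp (Equiv.curry (Fin N) (Fin 4) (Fin 2))]
  rw [show (∏ p : Fin N × Fin 4, ∑ k : Fin 2, P p (f p.1 p.2) k * Q p k (g p.1 p.2))
      = ∑ x : Fin N × Fin 4 → Fin 2, ∏ p : Fin N × Fin 4,
          P p (f p.1 p.2) (x p) * Q p (x p) (g p.1 p.2) from Fintype.prod_sum _]
  refine Finset.sum_congr rfl fun x _ => ?_
  simp only [Equiv.curry_apply, Function.curry]
  rw [Finset.prod_mul_distrib]

lemma kron_conjTranspose (P : Fin N × Fin 4 → Matrix (Fin 2) (Fin 2) ℂ) :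
    (kron N P)ᴴ = kron N (fun p => (P p)ᴴ) := by
  ext f g
  simp only [kron, Matrix.conjTranspose_apply, Matrix.of_apply]
  exact star_prod _ _

lemma tau_eq (i : Fin N) (a : Fin 4) (α : Fin 3) :
    tau N i a α = kron N (fun p => if p = (i, a) then pauliC a α else 1) := by
  ext f g
  simp only [tau, kron, Matrix.of_apply]
  rw [← Finset.mul_prod_erase univ _ (mem_univ (i, a))]
  simp only [if_pos rfl]
  congr 1
  refine Finset.prod_congr rfl fun p hp => ?_
  rw [if_neg (Finset.ne_of_mem_erase hp), Matrix.one_apply]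

end Aux

namespace Aux

lemma pauli_herm (α : Fin 3) : (pauli α)ᴴ = pauli α := by
  fin_cases α <;> ext i j <;> fin_cases i <;> fin_cases j <;>
    simp [pauli, Matrix.conjTranspose_apply]

lemma pauliC_herm (a : Fin 4) (α : Fin 3) : (pauliC a α)ᴴ = pauliC a α := by
  unfold pauliC
  split_ifs with h
  · exact pauli_herm α
  · ext i j
    simp only [Matrix.conjTranspose_apply, Matrix.map_apply, starRingEnd_apply, star_star]
    have := congrFun (congrFun (pauli_herm α) i) j
    simp only [Matrix.conjTranspose_apply] at this
    rw [← this, star_star]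

lemma tau_herm {N : ℕ} (i : Fin N) (a : Fin 4) (α : Fin 3) :
    (tau N i a α)ᴴ = tau N i a α := by
  rw [tau_eq, kron_conjTranspose]
  refine congrArg (kron N) (funext fun p => ?_)
  rw [apply_ite Matrix.conjTranspose, pauliC_herm, Matrix.conjTranspose_one]

lemma tau_comm {N : ℕ} {i j : Fin N} {a b : Fin 4} (h : (i, a) ≠ (j, b)) (α β : Fin 3) :
    tau N i a α * tau N j b β = tau N j b β * tau N i a α := by
  rw [tau_eq, tau_eq, kron_mul, kron_mul]
  refine congrArg (kron N) (funext fun p => ?_)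
  by_cases h1 : p = (i, a) <;> by_cases h2 : p = (j, b)
  · exact absurd (h1 ▸ h2) h
  · have hn : ¬(i = j ∧ a = b) := fun ⟨e1, e2⟩ => h (by rw [e1, e2])
    simp [h1, h2, hn]
  · have hn : ¬(j = i ∧ b = a) := fun ⟨e1, e2⟩ => h (by rw [e1, e2])
    simp [h1, h2, hn]
  · simp [h1, h2]

end Aux

namespace Aux

variable {N : ℕ}

abbrev M (N : ℕ) := Matrix (RepIdx N) (RepIdx N) ℂ

open ComplexOrder

lemma sum_swap4 {A B C : Type*} [Fintype A] [Fintype B] [AddCommMonoid C]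
    (F : A → A → B → B → C) :
    ∑ a, ∑ b, ∑ α, ∑ β, F a b α β = ∑ α, ∑ β, ∑ a, ∑ b, F a b α β := by
  calc ∑ a, ∑ b, ∑ α, ∑ β, F a b α β
      = ∑ a, ∑ α, ∑ b, ∑ β, F a b α β :=
        Finset.sum_congr rfl fun a _ => Finset.sum_comm
    _ = ∑ α, ∑ a, ∑ b, ∑ β, F a b α β := Finset.sum_comm
    _ = ∑ α, ∑ a, ∑ β, ∑ b, F a b α β :=
        Finset.sum_congr rfl fun α _ => Finset.sum_congr rfl fun a _ => Finset.sum_comm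
    _ = ∑ α, ∑ β, ∑ a, ∑ b, F a b α β :=
        Finset.sum_congr rfl fun α _ => Finset.sum_comm

def bondO (N : ℕ) (i j : Fin N) (α β : Fin 3) : M N :=
  ∑ a : Fin 4, ((-1 : ℂ)) ^ (a : ℕ) • (tau N i a α * tau N j a β)

lemma bondO_herm {i j : Fin N} (h : i ≠ j) (α β : Fin 3) :
    (bondO N i j α β)ᴴ = bondO N i j α β := by
  unfold bondO
  rw [Matrix.conjTranspose_sum]
  refine Finset.sum_congr rfl fun a _ => ?_
  rw [Matrix.conjTranspose_smul, Matrix.conjTranspose_mul, tau_herm, tau_herm,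
    tau_comm (fun e => h (Prod.mk.inj e).1.symm)]
  congr 1
  simp [Complex.star_def]

lemma bondO_sq_psd {i j : Fin N} (h : i ≠ j) (α β : Fin 3) :
    (bondO N i j α β * bondO N i j α β).PosSemidef := by
  nth_rewrite 1 [← bondO_herm h α β]
  exact Matrix.posSemidef_conjTranspose_mul_self _

lemma bond_expand {i j : Fin N} (h : i ≠ j) :
    (∑ a : Fin 4, ∑ b : Fin 4, ((-1 : ℂ) ^ ((a : ℕ) + (b : ℕ))) •
        ((∑ α : Fin 3, tau N i a α * tau N i b α) *
         (∑ β : Fin 3, tau N j a β * tau N j b β)))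
    = ∑ α : Fin 3, ∑ β : Fin 3, bondO N i j α β * bondO N i j α β := by
  have key : ∀ (a b : Fin 4) (α β : Fin 3),
      (tau N i a α * tau N j a β) * (tau N i b α * tau N j b β)
      = (tau N i a α * tau N i b α) * (tau N j a β * tau N j b β) := by
    intro a b α β
    rw [mul_assoc, ← mul_assoc (tau N j a β), tau_comm (fun e => h (Prod.mk.inj e).1.symm),
      mul_assoc, ← mul_assoc]
  calc (∑ a : Fin 4, ∑ b : Fin 4, ((-1 : ℂ) ^ ((a : ℕ) + (b : ℕ))) •
        ((∑ α : Fin 3, tau N i a α * tau N i b α) *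
         (∑ β : Fin 3, tau N j a β * tau N j b β)))
      = ∑ a : Fin 4, ∑ b : Fin 4, ∑ α : Fin 3, ∑ β : Fin 3,
          ((-1 : ℂ) ^ ((a : ℕ) + (b : ℕ))) •
            ((tau N i a α * tau N i b α) * (tau N j a β * tau N j b β)) := by
        refine Finset.sum_congr rfl fun a _ => Finset.sum_congr rfl fun b _ => ?_
        rw [Finset.sum_mul_sum, Finset.smul_sum]
        exact Finset.sum_congr rfl fun α _ => (Finset.smul_sum)
    _ = ∑ α : Fin 3, ∑ β : Fin 3, ∑ a : Fin 4, ∑ b : Fin 4,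
          ((-1 : ℂ) ^ ((a : ℕ) + (b : ℕ))) •
            ((tau N i a α * tau N i b α) * (tau N j a β * tau N j b β)) := by
        exact sum_swap4 _
    _ = ∑ α : Fin 3, ∑ β : Fin 3, bondO N i j α β * bondO N i j α β := by
        refine Finset.sum_congr rfl fun α _ => Finset.sum_congr rfl fun β _ => ?_
        unfold bondO
        rw [Finset.sum_mul_sum]
        refine Finset.sum_congr rfl fun a _ => Finset.sum_congr rfl fun b _ => ?_
        rw [smul_mul_smul_comm, key, ← pow_add]

lemma psd_real_smul {c : ℝ} (hc : 0 ≤ c) {A : M N} (hA : A.PosSemidef) :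
    ((c : ℂ) • A).PosSemidef := by
  rw [Matrix.posSemidef_iff_dotProduct_mulVec]
  constructor
  · rw [Matrix.IsHermitian, Matrix.conjTranspose_smul, hA.1]
    congr 1
    simp [Complex.star_def]
  · intro x
    rw [Matrix.smul_mulVec, dotProduct_smul, smul_eq_mul]
    exact mul_nonneg (by exact_mod_cast hc) (hA.dotProduct_mulVec_nonneg x)

theorem Heff_psd (J : ℝ) (hJ : 0 ≤ J) : (Heff N J).PosSemidef := by
  have hco : ((J : ℂ) / 2) = (((J / 2 : ℝ)) : ℂ) := by push_cast; ring
  rw [Heff, hco]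
  refine psd_real_smul (by linarith) ?_
  refine Finset.sum_induction _ _ (fun a b ha hb => ha.add hb) Matrix.PosSemidef.zero
    (fun i _ => ?_)
  by_cases h : (i : ℕ) + 1 < N
  · rw [dif_pos h]
    have hij : i ≠ (⟨(i : ℕ) + 1, h⟩ : Fin N) := by
      intro e
      have : (i : ℕ) = (i : ℕ) + 1 := congrArg Fin.val e
      omega
    rw [bond_expand hij]
    refine Finset.sum_induction _ _ (fun a b ha hb => ha.add hb) Matrix.PosSemidef.zero
      (fun α _ => ?_)
    exact Finset.sum_induction _ _ (fun a b ha hb => ha.add hb) Matrix.PosSemidef.zero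
      (fun β _ => bondO_sq_psd hij α β)
  · rw [dif_neg h]
    exact Matrix.PosSemidef.zero

end Aux


/-- the effective Hamiltonian is a positive semidefinite Hermitian operator:
it is Hermitian, and for every vector `ψ` the inner product `⟨ψ, H_eff ψ⟩` is real
(vanishing imaginary part) and nonnegative (real part `≥ 0`). -/
theorem stmt2 (N : ℕ) (J : ℝ) (hJ : 0 < J) :
    (Heff N J).IsHermitian ∧
    ∀ ψ : RepIdx N → ℂ,
      (star ψ ⬝ᵥ (Heff N J).mulVec ψ).im = 0 ∧
      0 ≤ (star ψ ⬝ᵥ (Heff N J).mulVec ψ).re := by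
  have h := Aux.Heff_psd (N := N) J hJ.le
  refine ⟨h.1, fun ψ => ?_⟩
  open ComplexOrder in
  have h2 := h.dotProduct_mulVec_nonneg ψ
  rw [Complex.le_def] at h2
  exact ⟨h2.2.symm, h2.1⟩

end
end

section
/- The product state |id⟩⟩^{⊗N} is a zero-energy ground state of the effective Hamiltonian: H_eff (|id⟩⟩^{⊗N}) = 0. -/
/-!
STATEMENT 3: The product state |id⟩⟩^{⊗N} is a zero-energy ground state of the
effective Hamiltonian: H_eff (|id⟩⟩^{⊗N}) = 0.
-/

open Matrix Finset

noncomputable section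

/-! ### Auxiliary machinery -/

/-- Single-site action of `Σ_α τ_a^α τ_b^α` on `|id⟩⟩`. -/
def vv (a b : Fin 4) (x : Fin 4 → Fin 2) : ℂ :=
  ∑ α : Fin 3, ∑ j1 : Fin 2, ∑ j2 : Fin 2,
    pauliC a α (x a) j1 *
      (pauliC b α (Function.update x a j1 b) j2 *
        idS (Function.update (Function.update x a j1) b j2))

section vvEval

private lemma vv01 : vv 0 1 = vv 0 0 := by
  funext x
  obtain ⟨x0, x1, x2, x3, hx⟩ : ∃ a b c d, x = ![a, b, c, d] :=
    ⟨x 0, x 1, x 2, x 3, by funext k; fin_cases k <;> rfl⟩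
  subst hx
  fin_cases x0 <;> fin_cases x1 <;> fin_cases x2 <;> fin_cases x3 <;>
    simp [vv, idS, pauliC, pauli, Fin.sum_univ_three, Fin.sum_univ_two, Function.update]

private lemma vv10 : vv 1 0 = vv 0 0 := by
  funext x
  obtain ⟨x0, x1, x2, x3, hx⟩ : ∃ a b c d, x = ![a, b, c, d] :=
    ⟨x 0, x 1, x 2, x 3, by funext k; fin_cases k <;> rfl⟩
  subst hx
  fin_cases x0 <;> fin_cases x1 <;> fin_cases x2 <;> fin_cases x3 <;>
    simp [vv, idS, pauliC, pauli, Fin.sum_univ_three, Fin.sum_univ_two, Function.update]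

private lemma vv11 : vv 1 1 = vv 0 0 := by
  funext x
  obtain ⟨x0, x1, x2, x3, hx⟩ : ∃ a b c d, x = ![a, b, c, d] :=
    ⟨x 0, x 1, x 2, x 3, by funext k; fin_cases k <;> rfl⟩
  subst hx
  fin_cases x0 <;> fin_cases x1 <;> fin_cases x2 <;> fin_cases x3 <;>
    simp [vv, idS, pauliC, pauli, Fin.sum_univ_three, Fin.sum_univ_two, Function.update]

private lemma vv23 : vv 2 3 = vv 2 2 := by
  funext x
  obtain ⟨x0, x1, x2, x3, hx⟩ : ∃ a b c d, x = ![a, b, c, d] :=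
    ⟨x 0, x 1, x 2, x 3, by funext k; fin_cases k <;> rfl⟩
  subst hx
  fin_cases x0 <;> fin_cases x1 <;> fin_cases x2 <;> fin_cases x3 <;>
    simp [vv, idS, pauliC, pauli, Fin.sum_univ_three, Fin.sum_univ_two, Function.update]

private lemma vv32 : vv 3 2 = vv 2 2 := by
  funext x
  obtain ⟨x0, x1, x2, x3, hx⟩ : ∃ a b c d, x = ![a, b, c, d] :=
    ⟨x 0, x 1, x 2, x 3, by funext k; fin_cases k <;> rfl⟩
  subst hx
  fin_cases x0 <;> fin_cases x1 <;> fin_cases x2 <;> fin_cases x3 <;>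
    simp [vv, idS, pauliC, pauli, Fin.sum_univ_three, Fin.sum_univ_two, Function.update]

private lemma vv33 : vv 3 3 = vv 2 2 := by
  funext x
  obtain ⟨x0, x1, x2, x3, hx⟩ : ∃ a b c d, x = ![a, b, c, d] :=
    ⟨x 0, x 1, x 2, x 3, by funext k; fin_cases k <;> rfl⟩
  subst hx
  fin_cases x0 <;> fin_cases x1 <;> fin_cases x2 <;> fin_cases x3 <;>
    simp [vv, idS, pauliC, pauli, Fin.sum_univ_three, Fin.sum_univ_two, Function.update]

private lemma vv03 : vv 0 3 = vv 0 2 := by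
  funext x
  obtain ⟨x0, x1, x2, x3, hx⟩ : ∃ a b c d, x = ![a, b, c, d] :=
    ⟨x 0, x 1, x 2, x 3, by funext k; fin_cases k <;> rfl⟩
  subst hx
  fin_cases x0 <;> fin_cases x1 <;> fin_cases x2 <;> fin_cases x3 <;>
    simp [vv, idS, pauliC, pauli, Fin.sum_univ_three, Fin.sum_univ_two, Function.update]

private lemma vv12 : vv 1 2 = vv 0 2 := by
  funext x
  obtain ⟨x0, x1, x2, x3, hx⟩ : ∃ a b c d, x = ![a, b, c, d] :=
    ⟨x 0, x 1, x 2, x 3, by funext k; fin_cases k <;> rfl⟩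
  subst hx
  fin_cases x0 <;> fin_cases x1 <;> fin_cases x2 <;> fin_cases x3 <;>
    simp [vv, idS, pauliC, pauli, Fin.sum_univ_three, Fin.sum_univ_two, Function.update]

private lemma vv13 : vv 1 3 = vv 0 2 := by
  funext x
  obtain ⟨x0, x1, x2, x3, hx⟩ : ∃ a b c d, x = ![a, b, c, d] :=
    ⟨x 0, x 1, x 2, x 3, by funext k; fin_cases k <;> rfl⟩
  subst hx
  fin_cases x0 <;> fin_cases x1 <;> fin_cases x2 <;> fin_cases x3 <;>
    simp [vv, idS, pauliC, pauli, Fin.sum_univ_three, Fin.sum_univ_two, Function.update]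

private lemma vv20 : vv 2 0 = vv 0 2 := by
  funext x
  obtain ⟨x0, x1, x2, x3, hx⟩ : ∃ a b c d, x = ![a, b, c, d] :=
    ⟨x 0, x 1, x 2, x 3, by funext k; fin_cases k <;> rfl⟩
  subst hx
  fin_cases x0 <;> fin_cases x1 <;> fin_cases x2 <;> fin_cases x3 <;>
    simp [vv, idS, pauliC, pauli, Fin.sum_univ_three, Fin.sum_univ_two, Function.update]

private lemma vv21 : vv 2 1 = vv 0 2 := by
  funext x
  obtain ⟨x0, x1, x2, x3, hx⟩ : ∃ a b c d, x = ![a, b, c, d] :=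
    ⟨x 0, x 1, x 2, x 3, by funext k; fin_cases k <;> rfl⟩
  subst hx
  fin_cases x0 <;> fin_cases x1 <;> fin_cases x2 <;> fin_cases x3 <;>
    simp [vv, idS, pauliC, pauli, Fin.sum_univ_three, Fin.sum_univ_two, Function.update]

private lemma vv30 : vv 3 0 = vv 0 2 := by
  funext x
  obtain ⟨x0, x1, x2, x3, hx⟩ : ∃ a b c d, x = ![a, b, c, d] :=
    ⟨x 0, x 1, x 2, x 3, by funext k; fin_cases k <;> rfl⟩
  subst hx
  fin_cases x0 <;> fin_cases x1 <;> fin_cases x2 <;> fin_cases x3 <;>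
    simp [vv, idS, pauliC, pauli, Fin.sum_univ_three, Fin.sum_univ_two, Function.update]

private lemma vv31 : vv 3 1 = vv 0 2 := by
  funext x
  obtain ⟨x0, x1, x2, x3, hx⟩ : ∃ a b c d, x = ![a, b, c, d] :=
    ⟨x 0, x 1, x 2, x 3, by funext k; fin_cases k <;> rfl⟩
  subst hx
  fin_cases x0 <;> fin_cases x1 <;> fin_cases x2 <;> fin_cases x3 <;>
    simp [vv, idS, pauliC, pauli, Fin.sum_univ_three, Fin.sum_univ_two, Function.update]

end vvEval

/-- The key cancellation: the signed sum of products of single-site amplitudes vanishes. -/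
lemma key_cancel (x y : Fin 4 → Fin 2) :
    ∑ a : Fin 4, ∑ b : Fin 4,
      ((-1 : ℂ) ^ ((a : ℕ) + (b : ℕ))) * (vv a b x * vv a b y) = 0 := by
  have e0 : ((0 : Fin 4) : ℕ) = 0 := rfl
  have e1 : ((1 : Fin 4) : ℕ) = 1 := rfl
  have e2 : ((2 : Fin 4) : ℕ) = 2 := rfl
  have e3 : ((3 : Fin 4) : ℕ) = 3 := rfl
  simp only [Fin.sum_univ_four, e0, e1, e2, e3, vv01, vv10, vv11, vv23, vv32, vv33,
    vv03, vv12, vv13, vv20, vv21, vv30, vv31]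
  ring

/-- full update of one qubit -/
def updQ {N : ℕ} (f : RepIdx N) (i : Fin N) (a : Fin 4) (j : Fin 2) : RepIdx N :=
  Function.update f i (Function.update (f i) a j)

lemma updQ_apply {N : ℕ} (f : RepIdx N) (i : Fin N) (a : Fin 4) (j : Fin 2)
    (k : Fin N) (c : Fin 4) :
    updQ f i a j k c = if k = i ∧ c = a then j else f k c := by
  unfold updQ
  rcases eq_or_ne k i with rfl | hk
  · rcases eq_or_ne c a with rfl | hc
    · simp [Function.update_apply]
    · simp [Function.update_apply, hc]
  · simp [Function.update_apply, hk]

lemma updQ_self {N : ℕ} (f : RepIdx N) (i : Fin N) (a : Fin 4) (j : Fin 2) :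
    updQ f i a j i = Function.update (f i) a j := by
  simp [updQ]

lemma updQ_other {N : ℕ} (f : RepIdx N) (i : Fin N) (a : Fin 4) (j : Fin 2)
    {k : Fin N} (h : k ≠ i) : updQ f i a j k = f k :=
  Function.update_of_ne h _ _

lemma updQ_updQ {N : ℕ} (f : RepIdx N) (i : Fin N) (a b : Fin 4) (j1 j2 : Fin 2) :
    updQ (updQ f i a j1) i b j2 =
      Function.update f i (Function.update (Function.update (f i) a j1) b j2) := by
  unfold updQ
  rw [Function.update_idem, Function.update_self]

/-- mulVec of a single-qubit operator. -/
lemma tau_mulVec {N : ℕ} (i : Fin N) (a : Fin 4) (α : Fin 3) (v : RepIdx N → ℂ) :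
    (tau N i a α).mulVec v =
      fun f => ∑ j : Fin 2, pauliC a α (f i a) j * v (updQ f i a j) := by
  funext f
  rw [Matrix.mulVec, dotProduct,
    ← Finset.sum_fiberwise (univ : Finset (RepIdx N)) (fun g => g i a)
      (fun g => tau N i a α f g * v g)]
  refine Finset.sum_congr rfl fun j _ => ?_
  rw [Finset.sum_eq_single (updQ f i a j)]
  · have h1 : updQ f i a j i a = j := by simp [updQ_apply]
    have h2 : tau N i a α f (updQ f i a j) = pauliC a α (f i a) j := by
      show pauliC a α (f i a) (updQ f i a j i a) * _ = _
      rw [h1]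
      rw [Finset.prod_eq_one, mul_one]
      intro p hp
      have hne : p ≠ (i, a) := Finset.ne_of_mem_erase hp
      have : updQ f i a j p.1 p.2 = f p.1 p.2 := by
        rw [updQ_apply]
        rw [if_neg]
        intro ⟨h1', h2'⟩
        exact hne (Prod.ext h1' h2')
      simp [this]
    rw [h2]
  · intro g hg hgne
    have hgj : g i a = j := (Finset.mem_filter.mp hg).2
    have : ∃ p : Fin N × Fin 4, p ≠ (i, a) ∧ f p.1 p.2 ≠ g p.1 p.2 := by
      by_contra h
      push_neg at h
      apply hgne
      funext k c
      rcases eq_or_ne (k, c) (i, a) with heq | hne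
      · injection heq with h1 h2
        subst h1; subst h2
        simp [hgj, updQ_apply]
      · rw [updQ_apply, if_neg (fun hh => hne (Prod.ext hh.1 hh.2))]
        exact (h (k, c) hne).symm
    obtain ⟨p, hpne, hpdiff⟩ := this
    have : tau N i a α f g = 0 := by
      show pauliC a α (f i a) (g i a) * _ = 0
      rw [Finset.prod_eq_zero (Finset.mem_erase.mpr ⟨hpne, mem_univ _⟩), mul_zero]
      simp [hpdiff]
    rw [this, zero_mul]
  · intro h
    exact absurd (Finset.mem_filter.mpr ⟨mem_univ _, by simp [updQ_apply]⟩) h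

lemma sum_mulVec {m n : Type*} [Fintype n] {ι : Type*} (s : Finset ι)
    (A : ι → Matrix m n ℂ) (v : n → ℂ) :
    (∑ i ∈ s, A i).mulVec v = ∑ i ∈ s, (A i).mulVec v := by
  funext j
  simp only [Matrix.mulVec, dotProduct, Finset.sum_apply, Matrix.sum_apply,
    Finset.sum_mul]
  rw [Finset.sum_comm]

/-- mulVec of `Σ_α τ_{i,a}^α τ_{i,b}^α`. -/
lemma pair_mulVec {N : ℕ} (i : Fin N) (a b : Fin 4) (v : RepIdx N → ℂ) :
    (∑ α : Fin 3, tau N i a α * tau N i b α).mulVec v =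
      fun f => ∑ α : Fin 3, ∑ j1 : Fin 2, ∑ j2 : Fin 2,
        pauliC a α (f i a) j1 *
          (pauliC b α (Function.update (f i) a j1 b) j2 *
            v (Function.update f i
                (Function.update (Function.update (f i) a j1) b j2))) := by
  rw [_root_.sum_mulVec]
  funext f
  rw [Finset.sum_apply]
  refine Finset.sum_congr rfl fun α _ => ?_
  rw [← Matrix.mulVec_mulVec, tau_mulVec]
  simp only [tau_mulVec]
  refine Finset.sum_congr rfl fun j1 _ => ?_
  rw [Finset.mul_sum]
  refine Finset.sum_congr rfl fun j2 _ => ?_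
  rw [updQ_updQ, updQ_self]

lemma idN_update2 {N : ℕ} {i i' : Fin N} (hne : i' ≠ i) (f : RepIdx N)
    (u u' : Fin 4 → Fin 2) :
    idN N (Function.update (Function.update f i u) i' u') =
      idS u * (idS u' * ∏ k ∈ (univ.erase i).erase i', idS (f k)) := by
  unfold idN
  rw [← Finset.prod_erase_mul _ _ (mem_univ i'),
    ← Finset.prod_erase_mul _ _
      (Finset.mem_erase.mpr ⟨fun h => hne h.symm, mem_univ i⟩)]
  rw [Function.update_self]
  rw [Function.update_of_ne (fun h => hne h.symm : i ≠ i'), Function.update_self]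
  have hcong : ∀ k ∈ (univ.erase i').erase i,
      idS (Function.update (Function.update f i u) i' u' k) = idS (f k) := by
    intro k hk
    obtain ⟨hki, hk'⟩ := Finset.mem_erase.mp hk
    have hki' : k ≠ i' := (Finset.mem_erase.mp hk').1
    rw [Function.update_of_ne hki', Function.update_of_ne hki]
  rw [Finset.prod_congr rfl hcong, Finset.erase_right_comm]
  ring

/-- The bond operator applied to the product state factorizes into single-site amplitudes. -/
lemma bond_mulVec {N : ℕ} {i i' : Fin N} (hne : i' ≠ i) (a b : Fin 4) :
    (((∑ α : Fin 3, tau N i a α * tau N i b α) *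
      (∑ β : Fin 3, tau N i' a β * tau N i' b β)).mulVec (idN N)) =
    fun f => vv a b (f i) * (vv a b (f i') *
      ∏ k ∈ (univ.erase i).erase i', idS (f k)) := by
  funext f
  rw [← Matrix.mulVec_mulVec, pair_mulVec]
  have hW : ∀ u : Fin 4 → Fin 2,
      (∑ β : Fin 3, tau N i' a β * tau N i' b β).mulVec (idN N)
        (Function.update f i u) =
      idS u * (vv a b (f i') * ∏ k ∈ (univ.erase i).erase i', idS (f k)) := by
    intro u
    rw [pair_mulVec]
    simp only [Function.update_of_ne hne, idN_update2 hne]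
    rw [vv]
    simp only [Finset.mul_sum, Finset.sum_mul]
    refine Finset.sum_congr rfl fun β _ => ?_
    refine Finset.sum_congr rfl fun j3 _ => ?_
    refine Finset.sum_congr rfl fun j4 _ => ?_
    ring
  simp only [hW]
  conv_rhs => rw [vv]
  simp only [Finset.sum_mul]
  refine Finset.sum_congr rfl fun α _ => ?_
  refine Finset.sum_congr rfl fun j1 _ => ?_
  refine Finset.sum_congr rfl fun j2 _ => ?_
  ring

/-- `H_eff` annihilates `|id⟩⟩^{⊗N}`. -/
theorem stmt3 (N : ℕ) (J : ℝ) (hJ : 0 < J) :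
    (Heff N J).mulVec (idN N) = 0 := by
  rw [Heff, Matrix.smul_mulVec, _root_.sum_mulVec]
  have hzero : ∀ i : Fin N,
      ((if h : (i : ℕ) + 1 < N then
        ∑ a : Fin 4, ∑ b : Fin 4, ((-1 : ℂ) ^ ((a : ℕ) + (b : ℕ))) •
          ((∑ α : Fin 3, tau N i a α * tau N i b α) *
           (∑ β : Fin 3, tau N ⟨(i : ℕ) + 1, h⟩ a β * tau N ⟨(i : ℕ) + 1, h⟩ b β))
      else 0).mulVec (idN N)) = 0 := by
    intro i
    split_ifs with h
    · set i' : Fin N := ⟨(i : ℕ) + 1, h⟩ with hi'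
      have hne : i' ≠ i := by
        intro hcontra
        have := congrArg Fin.val hcontra
        simp [hi'] at this
      rw [_root_.sum_mulVec]
      funext f
      rw [Finset.sum_apply]
      have : ∀ a : Fin 4,
          ((∑ b : Fin 4, ((-1 : ℂ) ^ ((a : ℕ) + (b : ℕ))) •
            ((∑ α : Fin 3, tau N i a α * tau N i b α) *
             (∑ β : Fin 3, tau N i' a β * tau N i' b β))).mulVec (idN N)) f =
          ∑ b : Fin 4, ((-1 : ℂ) ^ ((a : ℕ) + (b : ℕ))) *
            (vv a b (f i) * vv a b (f i')) *
            ∏ k ∈ (univ.erase i).erase i', idS (f k) := by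
        intro a
        rw [_root_.sum_mulVec, Finset.sum_apply]
        refine Finset.sum_congr rfl fun b _ => ?_
        rw [Matrix.smul_mulVec, Pi.smul_apply, bond_mulVec hne a b,
          smul_eq_mul]
        ring
      simp only [this, ← Finset.sum_mul, Pi.zero_apply]
      rw [key_cancel (f i) (f i'), zero_mul]
    · rw [Matrix.zero_mulVec]
  simp only [hzero]
  simp

end
end

section
/- The product state |swap⟩⟩^{⊗N} is a zero-energy ground state of the effective Hamiltonian: H_eff (|swap⟩⟩^{⊗N}) = 0. -/
set_option maxRecDepth 2000


/-! STATEMENT 4: |swap⟩⟩^{⊗N} is a zero-energy ground state of H_eff. -/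

open Matrix Finset

noncomputable section

namespace Stmt4Aux

/-- Update a single qubit `(i,a)` of a chain configuration. -/
def upd {N : ℕ} (x : RepIdx N) (i : Fin N) (a : Fin 4) (c : Fin 2) : RepIdx N :=
  Function.update x i (Function.update (x i) a c)

lemma upd_apply_self {N : ℕ} (x : RepIdx N) (i : Fin N) (a : Fin 4) (c : Fin 2) :
    upd x i a c i = Function.update (x i) a c := by simp [upd]

lemma upd_same {N : ℕ} (x : RepIdx N) (i : Fin N) (a : Fin 4) (c : Fin 2) :
    upd x i a c i a = c := by simp [upd]

lemma upd_apply_ne {N : ℕ} (x : RepIdx N) {i j : Fin N} (a : Fin 4) (c : Fin 2)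
    (h : j ≠ i) : upd x i a c j = x j := by
  simp [upd, Function.update_of_ne h]

lemma upd_apply_pair_ne {N : ℕ} (x : RepIdx N) {i j : Fin N} {a b : Fin 4} (c : Fin 2)
    (h : (j, b) ≠ (i, a)) : upd x i a c j b = x j b := by
  rcases eq_or_ne j i with rfl | hj
  · have hb : b ≠ a := by simpa using h
    simp [upd, Function.update_of_ne hb]
  · simp [upd, Function.update_of_ne hj]

/-- The action of `τ_{i,a}^α` as an operation on wavefunctions. -/
def act {N : ℕ} (i : Fin N) (a : Fin 4) (α : Fin 3) (w : RepIdx N → ℂ) : RepIdx N → ℂ :=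
  fun x => ∑ c : Fin 2, pauliC a α (x i a) c * w (upd x i a c)

lemma sum_mulVec {m : Type*} [Fintype m] {ι : Type*} (s : Finset ι)
    (M : ι → Matrix m m ℂ) (v : m → ℂ) :
    (∑ t ∈ s, M t).mulVec v = ∑ t ∈ s, (M t).mulVec v := by
  funext x
  simp only [Matrix.mulVec, dotProduct, Finset.sum_apply, Matrix.sum_apply, Finset.sum_mul]
  rw [Finset.sum_comm]

lemma tau_mulVec {N : ℕ} (i : Fin N) (a : Fin 4) (α : Fin 3) (w : RepIdx N → ℂ) :
    (tau N i a α).mulVec w = act i a α w := by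
  funext x
  have key : ∀ g : RepIdx N,
      (∏ p ∈ (univ : Finset (Fin N × Fin 4)).erase (i, a),
        if x p.1 p.2 = g p.1 p.2 then (1:ℂ) else 0)
      = if g = upd x i a (g i a) then 1 else 0 := by
    intro g
    rw [Finset.prod_boole]
    by_cases H : g = upd x i a (g i a)
    · rw [if_pos H, if_pos]
      intro p hp
      rw [Finset.mem_erase] at hp
      conv_rhs => rw [H]
      exact (upd_apply_pair_ne x _ (by simpa using hp.1)).symm
    · rw [if_neg H, if_neg]
      intro Hall
      apply H
      funext j b
      rcases eq_or_ne ((j, b) : Fin N × Fin 4) (i, a) with he | he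
      · injection he with h1 h2; subst h1; subst h2; rw [upd_same]
      · rw [upd_apply_pair_ne x _ he]
        exact (Hall (j, b) (by simp [he])).symm
  show ∑ g : RepIdx N, (pauliC a α (x i a) (g i a) *
      ∏ p ∈ (univ : Finset (Fin N × Fin 4)).erase (i, a),
        if x p.1 p.2 = g p.1 p.2 then (1:ℂ) else 0) * w g
      = ∑ c : Fin 2, pauliC a α (x i a) c * w (upd x i a c)
  rw [Finset.sum_congr rfl (fun g _ => by rw [key g])]
  have hG : ∀ g : RepIdx N,
      (∑ c : Fin 2, if g = upd x i a c then pauliC a α (x i a) (g i a) * w g else 0)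
      = if g = upd x i a (g i a) then pauliC a α (x i a) (g i a) * w g else 0 := by
    intro g
    by_cases hg : g = upd x i a (g i a)
    · rw [if_pos hg, Finset.sum_eq_single (g i a)]
      · rw [if_pos hg]
      · intro c _ hc
        exact if_neg fun hcon => hc (show c = g i a by rw [hcon, upd_same])
      · intro habs; exact absurd (Finset.mem_univ _) habs
    · rw [if_neg hg]
      apply Finset.sum_eq_zero
      intro c _
      refine if_neg fun hcon => hg ?_
      have hc : c = g i a := by rw [hcon, upd_same]
      rw [← hc]; exact hcon
  have hR : ∀ c : Fin 2, pauliC a α (x i a) c * w (upd x i a c)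
      = ∑ g : RepIdx N, if g = upd x i a c then pauliC a α (x i a) (g i a) * w g else 0 := by
    intro c
    rw [Finset.sum_ite_eq' univ (upd x i a c)]
    simp [upd_same]
  calc ∑ g : RepIdx N, (pauliC a α (x i a) (g i a) *
          if g = upd x i a (g i a) then (1:ℂ) else 0) * w g
      = ∑ g : RepIdx N, if g = upd x i a (g i a)
          then pauliC a α (x i a) (g i a) * w g else 0 := by
        refine Finset.sum_congr rfl fun g _ => ?_
        by_cases hg : g = upd x i a (g i a)
        · rw [if_pos hg, if_pos hg, mul_one]
        · rw [if_neg hg, if_neg hg, mul_zero, zero_mul]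
    _ = ∑ g : RepIdx N, ∑ c : Fin 2,
          if g = upd x i a c then pauliC a α (x i a) (g i a) * w g else 0 := by
        exact Finset.sum_congr rfl fun g _ => (hG g).symm
    _ = ∑ c : Fin 2, ∑ g : RepIdx N,
          if g = upd x i a c then pauliC a α (x i a) (g i a) * w g else 0 :=
        Finset.sum_comm
    _ = ∑ c : Fin 2, pauliC a α (x i a) c * w (upd x i a c) :=
        Finset.sum_congr rfl fun c _ => (hR c).symm

/-- Single-site action. -/
def act1 (a : Fin 4) (α : Fin 3) (v : (Fin 4 → Fin 2) → ℂ) : (Fin 4 → Fin 2) → ℂ :=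
  fun y => ∑ c : Fin 2, pauliC a α (y a) c * v (Function.update y a c)

/-- Product wavefunction. -/
def Pr {N : ℕ} (c : Fin N → (Fin 4 → Fin 2) → ℂ) : RepIdx N → ℂ := fun f => ∏ j, c j (f j)

lemma act_Pr {N : ℕ} (i : Fin N) (a : Fin 4) (α : Fin 3)
    (c : Fin N → (Fin 4 → Fin 2) → ℂ) :
    act i a α (Pr c) = Pr (Function.update c i (act1 a α (c i))) := by
  funext x
  simp only [act, Pr]
  rw [← Finset.mul_prod_erase univ
      (fun j => Function.update c i (act1 a α (c i)) j (x j)) (mem_univ i)]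
  beta_reduce
  rw [Function.update_self]
  rw [Finset.prod_congr rfl (fun j hj =>
      show Function.update c i (act1 a α (c i)) j (x j) = c j (x j) by
        rw [Function.update_of_ne (Finset.mem_erase.1 hj).1])]
  simp only [act1]
  rw [Finset.sum_mul]
  refine Finset.sum_congr rfl fun d _ => ?_
  rw [← Finset.mul_prod_erase univ (fun j => c j (upd x i a d j)) (mem_univ i)]
  beta_reduce
  rw [upd_apply_self]
  rw [Finset.prod_congr rfl (fun j hj => show c j (upd x i a d j) = c j (x j) by
      rw [upd_apply_ne x a d (Finset.mem_erase.1 hj).1])]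
  ring

lemma act_sum {N : ℕ} (i : Fin N) (a : Fin 4) (α : Fin 3) {ι : Type*} (s : Finset ι)
    (w : ι → RepIdx N → ℂ) :
    act i a α (fun x => ∑ t ∈ s, w t x) = fun x => ∑ t ∈ s, act i a α (w t) x := by
  funext x
  simp only [act, Finset.mul_sum]
  rw [Finset.sum_comm]

lemma pauli_sq (a : Fin 4) (α : Fin 3) (i j : Fin 2) :
    ∑ c : Fin 2, pauliC a α i c * pauliC a α c j = if i = j then 1 else 0 := by
  fin_cases a <;> fin_cases α <;> fin_cases i <;> fin_cases j <;>
    simp [pauliC, pauli, Fin.sum_univ_two, Complex.ext_iff] <;> norm_num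

lemma pauli_herm03 (α : Fin 3) (i j : Fin 2) : pauliC 0 α i j = pauliC 3 α j i := by
  fin_cases α <;> fin_cases i <;> fin_cases j <;>
    simp [pauliC, pauli, Complex.ext_iff] <;> norm_num

lemma pauli_herm12 (α : Fin 3) (i j : Fin 2) : pauliC 1 α i j = pauliC 2 α j i := by
  fin_cases α <;> fin_cases i <;> fin_cases j <;>
    simp [pauliC, pauli, Complex.ext_iff] <;> norm_num

lemma act1_act1 (a : Fin 4) (α : Fin 3) (v : (Fin 4 → Fin 2) → ℂ) :
    act1 a α (act1 a α v) = v := by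
  funext x
  simp only [act1, Function.update_self, Function.update_idem, Finset.mul_sum]
  rw [Finset.sum_comm]
  have h : ∀ d : Fin 2, ∑ c : Fin 2, pauliC a α (x a) c *
      (pauliC a α c d * v (Function.update x a d))
      = (if x a = d then 1 else 0) * v (Function.update x a d) := by
    intro d
    simp only [← mul_assoc, ← Finset.sum_mul]
    rw [pauli_sq]
  rw [Finset.sum_congr rfl fun d _ => h d]
  simp only [ite_mul, one_mul, zero_mul]
  rw [Finset.sum_ite_eq univ (x a)]
  simp [Function.update_eq_self]

lemma act1_comm {a b : Fin 4} (hab : a ≠ b) (α β : Fin 3) (v : (Fin 4 → Fin 2) → ℂ) :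
    act1 a α (act1 b β v) = act1 b β (act1 a α v) := by
  funext x
  simp only [act1, Finset.mul_sum]
  rw [Finset.sum_comm]
  refine Finset.sum_congr rfl fun d _ => Finset.sum_congr rfl fun c _ => ?_
  rw [Function.update_of_ne hab.symm, Function.update_of_ne hab,
      Function.update_comm hab]
  ring

lemma act1_swap03 (α : Fin 3) : act1 0 α swapS = act1 3 α swapS := by
  funext x
  simp only [act1, swapS]
  have e0 : ∀ c : Fin 2, (Function.update x 0 c 0 = Function.update x 0 c 3 ∧
      Function.update x 0 c 1 = Function.update x 0 c 2) ↔ (c = x 3 ∧ x 1 = x 2) := by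
    intro c
    simp [Function.update_of_ne (show (3:Fin 4) ≠ 0 by decide),
      Function.update_of_ne (show (1:Fin 4) ≠ 0 by decide),
      Function.update_of_ne (show (2:Fin 4) ≠ 0 by decide)]
  have e3 : ∀ c : Fin 2, (Function.update x 3 c 0 = Function.update x 3 c 3 ∧
      Function.update x 3 c 1 = Function.update x 3 c 2) ↔ (x 0 = c ∧ x 1 = x 2) := by
    intro c
    simp [Function.update_of_ne (show (0:Fin 4) ≠ 3 by decide),
      Function.update_of_ne (show (1:Fin 4) ≠ 3 by decide),
      Function.update_of_ne (show (2:Fin 4) ≠ 3 by decide)]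
  simp only [e0, e3, ite_and, mul_ite, mul_zero]
  by_cases h12 : x 1 = x 2
  · simp only [if_pos h12]
    rw [Finset.sum_ite_eq' univ (x 3), Finset.sum_ite_eq univ (x 0)]
    simp [pauli_herm03]
  · simp [if_neg h12]

lemma act1_swap12 (α : Fin 3) : act1 1 α swapS = act1 2 α swapS := by
  funext x
  simp only [act1, swapS]
  have e1 : ∀ c : Fin 2, (Function.update x 1 c 0 = Function.update x 1 c 3 ∧
      Function.update x 1 c 1 = Function.update x 1 c 2) ↔ (x 0 = x 3 ∧ c = x 2) := by
    intro c
    simp [Function.update_of_ne (show (0:Fin 4) ≠ 1 by decide),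
      Function.update_of_ne (show (3:Fin 4) ≠ 1 by decide),
      Function.update_of_ne (show (2:Fin 4) ≠ 1 by decide)]
  have e2 : ∀ c : Fin 2, (Function.update x 2 c 0 = Function.update x 2 c 3 ∧
      Function.update x 2 c 1 = Function.update x 2 c 2) ↔ (x 0 = x 3 ∧ x 1 = c) := by
    intro c
    simp [Function.update_of_ne (show (0:Fin 4) ≠ 2 by decide),
      Function.update_of_ne (show (3:Fin 4) ≠ 2 by decide),
      Function.update_of_ne (show (1:Fin 4) ≠ 2 by decide)]
  simp only [e1, e2, ite_and, mul_ite, mul_zero]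
  by_cases h03 : x 0 = x 3
  · simp only [if_pos h03]
    rw [Finset.sum_ite_eq' univ (x 2), Finset.sum_ite_eq univ (x 1)]
    simp [pauli_herm12]
  · simp [if_neg h03]

/-- The single-site two-contour operator applied to |swap⟩⟩. -/
def W (a b : Fin 4) : (Fin 4 → Fin 2) → ℂ :=
  fun y => ∑ α : Fin 3, act1 a α (act1 b α swapS) y

lemma comp03 (b : Fin 4) (α : Fin 3) :
    act1 3 α (act1 b α swapS) = act1 0 α (act1 b α swapS) := by
  fin_cases b
  · calc act1 3 α (act1 0 α swapS) = act1 3 α (act1 3 α swapS) := by rw [act1_swap03]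
      _ = swapS := act1_act1 _ _ _
      _ = act1 0 α (act1 0 α swapS) := (act1_act1 _ _ _).symm
  · calc act1 3 α (act1 1 α swapS) = act1 1 α (act1 3 α swapS) :=
        act1_comm (by decide) _ _ _
      _ = act1 1 α (act1 0 α swapS) := by rw [act1_swap03]
      _ = act1 0 α (act1 1 α swapS) := act1_comm (by decide) _ _ _
  · calc act1 3 α (act1 2 α swapS) = act1 2 α (act1 3 α swapS) :=
        act1_comm (by decide) _ _ _
      _ = act1 2 α (act1 0 α swapS) := by rw [act1_swap03]
      _ = act1 0 α (act1 2 α swapS) := act1_comm (by decide) _ _ _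
  · calc act1 3 α (act1 3 α swapS) = swapS := act1_act1 _ _ _
      _ = act1 0 α (act1 0 α swapS) := (act1_act1 _ _ _).symm
      _ = act1 0 α (act1 3 α swapS) := by rw [act1_swap03]

lemma comp12 (b : Fin 4) (α : Fin 3) :
    act1 2 α (act1 b α swapS) = act1 1 α (act1 b α swapS) := by
  fin_cases b
  · calc act1 2 α (act1 0 α swapS) = act1 0 α (act1 2 α swapS) :=
        act1_comm (by decide) _ _ _
      _ = act1 0 α (act1 1 α swapS) := by rw [← act1_swap12]
      _ = act1 1 α (act1 0 α swapS) := act1_comm (by decide) _ _ _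
  · calc act1 2 α (act1 1 α swapS) = act1 2 α (act1 2 α swapS) := by rw [act1_swap12]
      _ = swapS := act1_act1 _ _ _
      _ = act1 1 α (act1 1 α swapS) := (act1_act1 _ _ _).symm
  · calc act1 2 α (act1 2 α swapS) = swapS := act1_act1 _ _ _
      _ = act1 1 α (act1 1 α swapS) := (act1_act1 _ _ _).symm
      _ = act1 1 α (act1 2 α swapS) := by rw [act1_swap12]
  · calc act1 2 α (act1 3 α swapS) = act1 3 α (act1 2 α swapS) :=
        act1_comm (by decide) _ _ _
      _ = act1 3 α (act1 1 α swapS) := by rw [← act1_swap12]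
      _ = act1 1 α (act1 3 α swapS) := act1_comm (by decide) _ _ _

lemma W30 (b : Fin 4) : W 3 b = W 0 b := by
  funext y
  exact Finset.sum_congr rfl fun α _ => congrFun (comp03 b α) y

lemma W21 (b : Fin 4) : W 2 b = W 1 b := by
  funext y
  exact Finset.sum_congr rfl fun α _ => congrFun (comp12 b α) y

lemma keyW (x y : Fin 4 → Fin 2) :
    ∑ a : Fin 4, ∑ b : Fin 4, ((-1:ℂ)) ^ ((a:ℕ) + (b:ℕ)) * (W a b x * W a b y) = 0 := by
  rw [Finset.sum_comm]
  apply Finset.sum_eq_zero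
  intro b _
  rw [Fin.sum_univ_four, W30 b, W21 b]
  norm_num [show ((0:Fin 4):ℕ) = 0 from rfl, show ((1:Fin 4):ℕ) = 1 from rfl,
    show ((2:Fin 4):ℕ) = 2 from rfl, show ((3:Fin 4):ℕ) = 3 from rfl, pow_add, pow_succ]

lemma Pr_two {N : ℕ} {i i' : Fin N} (h : i ≠ i') (u v : (Fin 4 → Fin 2) → ℂ)
    (f : RepIdx N) :
    Pr (Function.update (Function.update (fun _ => swapS) i' v) i u) f
      = u (f i) * (v (f i') * ∏ j ∈ (univ.erase i).erase i', swapS (f j)) := by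
  unfold Pr
  rw [← Finset.mul_prod_erase univ
      (fun j => Function.update (Function.update (fun _ => swapS) i' v) i u j (f j))
      (mem_univ i)]
  rw [Function.update_self]
  congr 1
  rw [← Finset.mul_prod_erase (univ.erase i)
      (fun j => Function.update (Function.update (fun _ => swapS) i' v) i u j (f j))
      (Finset.mem_erase.2 ⟨h.symm, mem_univ i'⟩)]
  rw [Function.update_of_ne h.symm, Function.update_self]
  congr 1
  refine Finset.prod_congr rfl fun j hj => ?_
  have hji : j ≠ i := (Finset.mem_erase.1 (Finset.mem_erase.1 hj).2).1
  have hji' : j ≠ i' := (Finset.mem_erase.1 hj).1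
  rw [Function.update_of_ne hji, Function.update_of_ne hji']

lemma block_mulVec {N : ℕ} (i i' : Fin N) (h : i ≠ i') (a b : Fin 4) :
    ((∑ α : Fin 3, tau N i a α * tau N i b α) *
     (∑ β : Fin 3, tau N i' a β * tau N i' b β)).mulVec (swapN N)
    = fun f => W a b (f i) *
        (W a b (f i') * ∏ j ∈ (univ.erase i).erase i', swapS (f j)) := by
  rw [← Matrix.mulVec_mulVec]
  have hB : (∑ β : Fin 3, tau N i' a β * tau N i' b β).mulVec (swapN N)
      = fun f => ∑ β : Fin 3,
          Pr (Function.update (fun _ => swapS) i' (act1 a β (act1 b β swapS))) f := by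
    rw [sum_mulVec]
    funext f
    rw [Finset.sum_apply]
    refine Finset.sum_congr rfl fun β _ => ?_
    rw [← Matrix.mulVec_mulVec, tau_mulVec, tau_mulVec]
    have hsw : swapN N = Pr (fun _ => swapS) := rfl
    rw [hsw, act_Pr, act_Pr]
    simp [Function.update_self, Function.update_idem]
  rw [hB, sum_mulVec]
  funext f
  rw [Finset.sum_apply]
  have hA : ∀ α : Fin 3, ((tau N i a α * tau N i b α).mulVec
      (fun f => ∑ β : Fin 3,
        Pr (Function.update (fun _ => swapS) i' (act1 a β (act1 b β swapS))) f)) f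
      = ∑ β : Fin 3, act1 a α (act1 b α swapS) (f i) *
          (act1 a β (act1 b β swapS) (f i') *
            ∏ j ∈ (univ.erase i).erase i', swapS (f j)) := by
    intro α
    rw [← Matrix.mulVec_mulVec, tau_mulVec, tau_mulVec, act_sum, act_sum]
    show ∑ β : Fin 3, act i a α (act i b α
        (Pr (Function.update (fun _ => swapS) i' (act1 a β (act1 b β swapS))))) f = _
    refine Finset.sum_congr rfl fun β _ => ?_
    rw [act_Pr]
    simp only [Function.update_of_ne h]
    rw [act_Pr]
    simp only [Function.update_self, Function.update_idem]
    exact Pr_two h _ _ f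
  rw [Finset.sum_congr rfl fun α _ => hA α]
  trans (∑ α : Fin 3, act1 a α (act1 b α swapS) (f i)) *
      ((∑ β : Fin 3, act1 a β (act1 b β swapS) (f i')) *
        ∏ j ∈ (univ.erase i).erase i', swapS (f j))
  · rw [Finset.sum_mul]
    refine Finset.sum_congr rfl fun α _ => ?_
    rw [Finset.sum_mul, Finset.mul_sum]
  · rfl

end Stmt4Aux

/-- `H_eff` annihilates `|swap⟩⟩^{⊗N}`. -/
theorem stmt4 (N : ℕ) (J : ℝ) (hJ : 0 < J) :
    (Heff N J).mulVec (swapN N) = 0 := by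
  unfold Heff
  rw [Matrix.smul_mulVec, Stmt4Aux.sum_mulVec]
  rw [Finset.sum_eq_zero, smul_zero]
  intro i _
  by_cases h : (i : ℕ) + 1 < N
  · rw [dif_pos h]
    have hne : i ≠ (⟨(i : ℕ) + 1, h⟩ : Fin N) := by
      intro he
      have h2 := congrArg Fin.val he
      simp at h2
    rw [Stmt4Aux.sum_mulVec]
    funext f
    simp only [Stmt4Aux.sum_mulVec, Matrix.smul_mulVec,
      Stmt4Aux.block_mulVec i _ hne, Finset.sum_apply, Pi.smul_apply, smul_eq_mul,
      Pi.zero_apply]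
    have hk := Stmt4Aux.keyW (f i) (f (⟨(i : ℕ) + 1, h⟩ : Fin N))
    calc ∑ a : Fin 4, ∑ b : Fin 4, (-1 : ℂ) ^ ((a : ℕ) + (b : ℕ)) *
            (Stmt4Aux.W a b (f i) * (Stmt4Aux.W a b (f (⟨(i : ℕ) + 1, h⟩ : Fin N)) *
              ∏ j ∈ (univ.erase i).erase (⟨(i : ℕ) + 1, h⟩ : Fin N), swapS (f j)))
        = (∑ a : Fin 4, ∑ b : Fin 4, (-1 : ℂ) ^ ((a : ℕ) + (b : ℕ)) *
            (Stmt4Aux.W a b (f i) * Stmt4Aux.W a b (f (⟨(i : ℕ) + 1, h⟩ : Fin N)))) *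
            ∏ j ∈ (univ.erase i).erase (⟨(i : ℕ) + 1, h⟩ : Fin N), swapS (f j) := by
          rw [Finset.sum_mul]
          refine Finset.sum_congr rfl fun a _ => ?_
          rw [Finset.sum_mul]
          refine Finset.sum_congr rfl fun b _ => ?_
          ring
      _ = 0 := by rw [hk, zero_mul]
  · rw [dif_neg h, Matrix.zero_mulVec]


end
end

section
/- Fix 0 ≤ λ < 3/4 and let M(λ) = (1-λ) I₄ + (λ/3) Σ_{α∈{x,y,z}} σ^α ⊗ (σ^α)^* ∈ M₄(ℂ), the vectorized single-qubit depolarizing channel. Then (i) for every 2×2 complex matrix ρ, M(λ)·vec(ρ) = vec((1-λ)ρ + (λ/3) Σ_α σ^α ρ σ^α), where vec(ρ) = Σ_{a,b} ρ_{ab} |a⟩⊗|b⟩; and (ii) M(λ) = exp( -(3/4)·log(1/(1-4λ/3)) · ( I₄ - (1/3) Σ_{α} σ^α ⊗ (σ^α)^* ) ), i.e., the noisy channel is exactly the imaginary-time evolution generated by the Hermitian perturbation H_depol with local Zeeman coefficient (3/4)log(1/(1-4λ/3)). -/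
/-! STATEMENT 12: the vectorized single-qubit depolarizing channel
`M(λ) = (1-λ)I₄ + (λ/3)Σ_α σ^α⊗(σ^α)^*` acts on `vec(ρ)` as the depolarizing channel on ρ,
and equals `exp(-(3/4)·log(1/(1-4λ/3))·(I₄ - (1/3)Σ_α σ^α⊗(σ^α)^*))`. -/

open Matrix
open scoped Kronecker

noncomputable section

/-- The vectorized single-qubit depolarizing channel
`M(λ) = (1-λ) I₄ + (λ/3) Σ_α σ^α ⊗ (σ^α)^*`. -/
def depolM (lam : ℝ) : Matrix (Fin 2 × Fin 2) (Fin 2 × Fin 2) ℂ :=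
  ((1 - lam : ℝ) : ℂ) • (1 : Matrix (Fin 2 × Fin 2) (Fin 2 × Fin 2) ℂ) +
    ((lam / 3 : ℝ) : ℂ) • ∑ α : Fin 3, pauli α ⊗ₖ (pauli α).map (starRingEnd ℂ)

/-- Vectorization `vec(ρ) = Σ_{a,b} ρ_{ab} |a⟩⊗|b⟩`. -/
def vecM (ρ : Matrix (Fin 2) (Fin 2) ℂ) : Fin 2 × Fin 2 → ℂ := fun p => ρ p.1 p.2

section ExpAux

variable {m : Type*} [Fintype m] [DecidableEq m]

local instance : NormedRing (Matrix m m ℂ) := Matrix.linftyOpNormedRing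
local instance : NormedAlgebra ℂ (Matrix m m ℂ) := Matrix.linftyOpNormedAlgebra

lemma pow_idem_aux {Q : Matrix m m ℂ} (hQ : Q * Q = Q) : ∀ k, Q ^ (k + 1) = Q
  | 0 => pow_one Q
  | k + 1 => by rw [pow_succ, pow_idem_aux hQ k, hQ]

/-- Exponential of a scalar multiple of an idempotent matrix. -/
lemma exp_smul_idem (a : ℂ) {Q : Matrix m m ℂ} (hQ : Q * Q = Q) :
    NormedSpace.exp (a • Q) = 1 + (Complex.exp a - 1) • Q := by
  have hsum := NormedSpace.expSeries_summable' (𝕂 := ℂ) (a • Q)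
  have hsum2 := NormedSpace.expSeries_summable' (𝕂 := ℂ) (a : ℂ)
  simp only [NormedSpace.exp_eq_tsum ℂ]
  erw [Summable.tsum_eq_zero_add hsum]
  have h0 : ((Nat.factorial 0 : ℂ))⁻¹ • (a • Q) ^ 0 = (1 : Matrix m m ℂ) := by simp
  rw [h0]
  congr 1
  have hterm : ∀ n : ℕ, ((Nat.factorial (n + 1) : ℂ))⁻¹ • (a • Q) ^ (n + 1)
      = (((Nat.factorial (n + 1) : ℂ))⁻¹ * a ^ (n + 1)) • Q := by
    intro n
    rw [smul_pow, pow_idem_aux hQ, smul_smul]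
  simp_rw [hterm]
  have hsumc : Summable fun n : ℕ => ((Nat.factorial (n + 1) : ℂ))⁻¹ * a ^ (n + 1) := by
    have := hsum2.comp_injective Nat.succ_injective
    simpa [smul_eq_mul, Function.comp_def] using this
  rw [Summable.tsum_smul_const hsumc]
  congr 1
  have hexp : Complex.exp a = ∑' n : ℕ, ((Nat.factorial n : ℂ))⁻¹ • a ^ n := by
    rw [Complex.exp_eq_exp_ℂ, NormedSpace.exp_eq_tsum ℂ]
  rw [hexp, Summable.tsum_eq_zero_add hsum2]
  simp [smul_eq_mul]

end ExpAux

set_option maxHeartbeats 1000000 in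
theorem stmt12 (lam : ℝ) (h0 : 0 ≤ lam) (h1 : lam < 3 / 4) :
    (∀ ρ : Matrix (Fin 2) (Fin 2) ℂ,
      (depolM lam).mulVec (vecM ρ) =
        vecM (((1 - lam : ℝ) : ℂ) • ρ +
          ((lam / 3 : ℝ) : ℂ) • ∑ α : Fin 3, pauli α * ρ * pauli α)) ∧
    depolM lam =
      NormedSpace.exp
        ((-(((3 / 4 * Real.log (1 / (1 - 4 * lam / 3)) : ℝ)) : ℂ)) •
          ((1 : Matrix (Fin 2 × Fin 2) (Fin 2 × Fin 2) ℂ) -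
            (1 / 3 : ℂ) • ∑ α : Fin 3, pauli α ⊗ₖ (pauli α).map (starRingEnd ℂ))) := by
  constructor
  · intro ρ
    funext p
    obtain ⟨a, b⟩ := p
    fin_cases a <;> fin_cases b <;>
      simp [depolM, vecM, mulVec, dotProduct, Fintype.sum_prod_type, Fin.sum_univ_two,
        Fin.sum_univ_three, pauli, Matrix.mul_apply, Matrix.sum_apply, Matrix.one_apply,
        Prod.ext_iff, Matrix.vecMul, Matrix.kroneckerMap_apply] <;>
      ring_nf <;> simp [Complex.I_sq] <;> ring_nf
  · -- S := Σ_α σ^α ⊗ (σ^α)^*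
    have hS2 : (∑ α : Fin 3, pauli α ⊗ₖ (pauli α).map (starRingEnd ℂ)) *
        (∑ α : Fin 3, pauli α ⊗ₖ (pauli α).map (starRingEnd ℂ)) =
        (2 : ℂ) • (∑ α : Fin 3, pauli α ⊗ₖ (pauli α).map (starRingEnd ℂ)) +
        (3 : ℂ) • (1 : Matrix (Fin 2 × Fin 2) (Fin 2 × Fin 2) ℂ) := by
      ext ⟨i1, i2⟩ ⟨j1, j2⟩
      fin_cases i1 <;> fin_cases i2 <;> fin_cases j1 <;> fin_cases j2 <;>
        simp [pauli, Matrix.mul_apply, Fintype.sum_prod_type, Fin.sum_univ_two,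
          Fin.sum_univ_three, Matrix.sum_apply, Matrix.one_apply, Prod.ext_iff,
          Matrix.kroneckerMap_apply] <;> ring_nf
    set S : Matrix (Fin 2 × Fin 2) (Fin 2 × Fin 2) ℂ :=
      ∑ α : Fin 3, pauli α ⊗ₖ (pauli α).map (starRingEnd ℂ) with hS
    set Q : Matrix (Fin 2 × Fin 2) (Fin 2 × Fin 2) ℂ :=
      (3/4 : ℂ) • 1 - (1/4 : ℂ) • S with hQdef
    have hQ : Q * Q = Q := by
      rw [hQdef]
      simp only [sub_mul, mul_sub, smul_mul_assoc, Matrix.mul_smul, one_mul, mul_one]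
      rw [hS2]
      module
    have ht : (0:ℝ) < 1 - 4 * lam / 3 := by linarith
    have harg : (-(((3 / 4 * Real.log (1 / (1 - 4 * lam / 3)) : ℝ)) : ℂ)) •
        ((1 : Matrix (Fin 2 × Fin 2) (Fin 2 × Fin 2) ℂ) - (1/3 : ℂ) • S)
        = ((Real.log (1 - 4 * lam / 3) : ℝ) : ℂ) • Q := by
      have h13 : (1 : Matrix (Fin 2 × Fin 2) (Fin 2 × Fin 2) ℂ) - (1/3 : ℂ) • S
          = (4/3 : ℂ) • Q := by
        rw [hQdef, smul_sub, smul_smul, smul_smul]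
        norm_num
      rw [h13, smul_smul]
      congr 1
      rw [one_div, Real.log_inv]
      push_cast
      ring
    rw [harg, exp_smul_idem _ hQ]
    have hexp : Complex.exp ((Real.log (1 - 4 * lam / 3) : ℝ) : ℂ)
        = ((1 - 4 * lam / 3 : ℝ) : ℂ) := by
      rw [← Complex.ofReal_exp, Real.exp_log ht]
    rw [hexp]
    rw [depolM, hQdef, ← hS]
    have hc1 : ((1 - lam : ℝ) : ℂ) = 1 + (((1 - 4 * lam / 3 : ℝ) : ℂ) - 1) * (3/4) := by
      push_cast; ring
    have hc2 : ((lam / 3 : ℝ) : ℂ) = -((((1 - 4 * lam / 3 : ℝ) : ℂ) - 1) * (1/4)) := by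
      push_cast; ring
    rw [hc1, hc2, smul_sub, smul_smul, smul_smul]
    module

end
end

section
/- Let d_A = d_R·d_B, let U be a d_A×d_A unitary, and let {E_m}_{m=1}^{d_E} be d_A×d_A matrices with Σ_m E_m†E_m = I. Set |φ_i⟩ = U(|i⟩⊗|0⟩) ∈ ℂ^{d_A} for i=1,…,d_R, and define the pure state |Ψ'⟩ = (1/√d_R) Σ_{i=1}^{d_R} Σ_{m=1}^{d_E} |i⟩ ⊗ (E_m|φ_i⟩) ⊗ |m⟩ in ℂ^{d_R}⊗ℂ^{d_A}⊗ℂ^{d_E}, with reduced density matrices ρ'_{RE} = Tr_A |Ψ'⟩⟨Ψ'|, ρ'_R = Tr_{AE} |Ψ'⟩⟨Ψ'|, ρ'_E = Tr_{RA} |Ψ'⟩⟨Ψ'|. Then the mutual purity 𝓕 = Tr(ρ'_{RE}²) − Tr(ρ'_R²)·Tr(ρ'_E²) equals the replica amplitude 𝓕 = (1/d_R²) ⟨ I_{d_A} , (Σ_{m,n=1}^{d_E} E_m⊗Ē_n⊗E_n⊗Ē_m)(U⊗Ū⊗U⊗Ū) v ⟩, where |I_{d_A}⟩ = Σ_{p,q=1}^{d_A}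 |p⟩⊗|p⟩⊗|q⟩⊗|q⟩, v = Σ_{i,j=1}^{d_R} ( |i0⟩⊗|j0⟩⊗|j0⟩⊗|i0⟩ − (1/d_R)|i0⟩⊗|i0⟩⊗|j0⟩⊗|j0⟩ ) with |i0⟩ = |i⟩⊗|0⟩ ∈ ℂ^{d_A}, overbars denote entrywise complex conjugation, and ⊗ between matrices is the Kronecker product. -/
/-! STATEMENT 16: the mutual purity 𝓕 = Tr(ρ'_{RE}²) − Tr(ρ'_R²)Tr(ρ'_E²) of the
noise-affected maximally entangled encoded state equals the four-contour replica amplitude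
(1/d_R²)⟨I_{d_A}, (Σ_{m,n} E_m⊗Ē_n⊗E_n⊗Ē_m)(U⊗Ū⊗U⊗Ū) v⟩. -/

open Matrix
open scoped Kronecker

noncomputable section

variable (dR dB dE : ℕ)

/-- The system `A` has dimension `d_A = d_R·d_B`, with basis indexed by pairs. -/
abbrev AIdx (dR dB : ℕ) := Fin dR × Fin dB

/-- The global state `|Ψ'⟩ = (1/√d_R) Σ_{i,m} |i⟩ ⊗ (E_m U(|i⟩⊗|0⟩)) ⊗ |m⟩` on `R ⊗ A ⊗ E`. -/
def psi' (hB : 1 ≤ dB) (U : Matrix (AIdx dR dB) (AIdx dR dB) ℂ)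
    (E : Fin dE → Matrix (AIdx dR dB) (AIdx dR dB) ℂ) :
    Fin dR × AIdx dR dB × Fin dE → ℂ :=
  fun x =>
    ((Real.sqrt dR : ℝ) : ℂ)⁻¹ *
      ((E x.2.2).mulVec (U.mulVec fun p => if p = (x.1, ⟨0, hB⟩) then 1 else 0)) x.2.1

/-- The reduced density matrix `ρ'_{RE} = Tr_A |Ψ'⟩⟨Ψ'|`. -/
def rhoRE (hB : 1 ≤ dB) (U : Matrix (AIdx dR dB) (AIdx dR dB) ℂ)
    (E : Fin dE → Matrix (AIdx dR dB) (AIdx dR dB) ℂ) :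
    Matrix (Fin dR × Fin dE) (Fin dR × Fin dE) ℂ :=
  Matrix.of fun x y => ∑ a : AIdx dR dB,
    psi' dR dB dE hB U E (x.1, a, x.2) * star (psi' dR dB dE hB U E (y.1, a, y.2))

/-- The reduced density matrix `ρ'_R = Tr_{AE} |Ψ'⟩⟨Ψ'|`. -/
def rhoR (hB : 1 ≤ dB) (U : Matrix (AIdx dR dB) (AIdx dR dB) ℂ)
    (E : Fin dE → Matrix (AIdx dR dB) (AIdx dR dB) ℂ) :
    Matrix (Fin dR) (Fin dR) ℂ :=
  Matrix.of fun i j => ∑ a : AIdx dR dB, ∑ m : Fin dE,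
    psi' dR dB dE hB U E (i, a, m) * star (psi' dR dB dE hB U E (j, a, m))

/-- The reduced density matrix `ρ'_E = Tr_{RA} |Ψ'⟩⟨Ψ'|`. -/
def rhoE (hB : 1 ≤ dB) (U : Matrix (AIdx dR dB) (AIdx dR dB) ℂ)
    (E : Fin dE → Matrix (AIdx dR dB) (AIdx dR dB) ℂ) :
    Matrix (Fin dE) (Fin dE) ℂ :=
  Matrix.of fun m n => ∑ i : Fin dR, ∑ a : AIdx dR dB,
    psi' dR dB dE hB U E (i, a, m) * star (psi' dR dB dE hB U E (i, a, n))

/-- The boundary vector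
`v = Σ_{i,j} (|i0⟩⊗|j0⟩⊗|j0⟩⊗|i0⟩ − (1/d_R)|i0⟩⊗|i0⟩⊗|j0⟩⊗|j0⟩)` in `(ℂ^{d_A})^{⊗4}`. -/
def vIn (hB : 1 ≤ dB) :
    ((AIdx dR dB × AIdx dR dB) × AIdx dR dB) × AIdx dR dB → ℂ :=
  fun x => ∑ i : Fin dR, ∑ j : Fin dR,
    ((if x = ((((i, ⟨0, hB⟩), (j, ⟨0, hB⟩)), (j, ⟨0, hB⟩)), (i, ⟨0, hB⟩)) then (1 : ℂ) else 0) -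
      ((dR : ℂ))⁻¹ *
        (if x = ((((i, ⟨0, hB⟩), (i, ⟨0, hB⟩)), (j, ⟨0, hB⟩)), (j, ⟨0, hB⟩)) then (1 : ℂ) else 0))

def colv (hB : 1 ≤ dB) (U : Matrix (AIdx dR dB) (AIdx dR dB) ℂ)
    (E : Fin dE → Matrix (AIdx dR dB) (AIdx dR dB) ℂ) (m : Fin dE) (i : Fin dR) :
    AIdx dR dB → ℂ :=
  fun a => (E m * U) a (i, ⟨0, hB⟩)

def Bf (hB : 1 ≤ dB) (U : Matrix (AIdx dR dB) (AIdx dR dB) ℂ)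
    (E : Fin dE → Matrix (AIdx dR dB) (AIdx dR dB) ℂ) (m n : Fin dE) (i j : Fin dR) : ℂ :=
  ∑ a : AIdx dR dB, colv dR dB dE hB U E m i a * (starRingEnd ℂ) (colv dR dB dE hB U E n j a)

theorem psi'_eq (hB : 1 ≤ dB) (U : Matrix (AIdx dR dB) (AIdx dR dB) ℂ)
    (E : Fin dE → Matrix (AIdx dR dB) (AIdx dR dB) ℂ) (i : Fin dR) (a : AIdx dR dB) (m : Fin dE) :
    psi' dR dB dE hB U E (i, a, m)
      = ((Real.sqrt dR : ℝ) : ℂ)⁻¹ * colv dR dB dE hB U E m i a := by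
  have h : (fun p : AIdx dR dB => if p = (i, ⟨0, hB⟩) then (1:ℂ) else 0)
      = Pi.single (i, (⟨0, hB⟩ : Fin dB)) 1 := by
    funext p; simp [Pi.single_apply]
  show _ * _ = _ * _
  congr 1
  rw [h, Matrix.mulVec_mulVec, Matrix.mulVec_single_one]
  rfl

theorem hc_mul (hB : 1 ≤ dB) :
    (((Real.sqrt dR : ℝ) : ℂ))⁻¹ * star (((Real.sqrt dR : ℝ) : ℂ))⁻¹ = ((dR : ℂ))⁻¹ := by
  rw [show star ((((Real.sqrt dR : ℝ) : ℂ))⁻¹) = (((Real.sqrt dR : ℝ) : ℂ))⁻¹ by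
    rw [star_inv₀]; simp [Complex.star_def, Complex.conj_ofReal]]
  rw [← mul_inv, ← Complex.ofReal_mul, Real.mul_self_sqrt (Nat.cast_nonneg dR)]
  push_cast
  rfl

theorem pair_sum (hB : 1 ≤ dB) (U : Matrix (AIdx dR dB) (AIdx dR dB) ℂ)
    (E : Fin dE → Matrix (AIdx dR dB) (AIdx dR dB) ℂ) (i j : Fin dR) (m n : Fin dE) :
    ∑ a : AIdx dR dB,
        psi' dR dB dE hB U E (i, a, m) * star (psi' dR dB dE hB U E (j, a, n))
      = ((dR : ℂ))⁻¹ * Bf dR dB dE hB U E m n i j := by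
  rw [Bf, Finset.mul_sum]
  refine Finset.sum_congr rfl fun a _ => ?_
  rw [psi'_eq, psi'_eq, star_mul']
  rw [show ∀ (c w c' w' : ℂ), c * w * (c' * w') = (c * c') * (w * w') by intros; ring]
  rw [hc_mul dR dB hB]
  rfl

theorem rhoRE_apply (hB : 1 ≤ dB) (U : Matrix (AIdx dR dB) (AIdx dR dB) ℂ)
    (E : Fin dE → Matrix (AIdx dR dB) (AIdx dR dB) ℂ) (x y : Fin dR × Fin dE) :
    rhoRE dR dB dE hB U E x y = ((dR : ℂ))⁻¹ * Bf dR dB dE hB U E x.2 y.2 x.1 y.1 :=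
  pair_sum dR dB dE hB U E x.1 y.1 x.2 y.2

theorem rhoE_apply (hB : 1 ≤ dB) (U : Matrix (AIdx dR dB) (AIdx dR dB) ℂ)
    (E : Fin dE → Matrix (AIdx dR dB) (AIdx dR dB) ℂ) (m n : Fin dE) :
    rhoE dR dB dE hB U E m n = ((dR : ℂ))⁻¹ * ∑ i : Fin dR, Bf dR dB dE hB U E m n i i := by
  rw [rhoE, Finset.mul_sum]
  show ∑ i : Fin dR, _ = _
  exact Finset.sum_congr rfl fun i _ => pair_sum dR dB dE hB U E i i m n

theorem Bf_sum (hB : 1 ≤ dB) (U : Matrix (AIdx dR dB) (AIdx dR dB) ℂ)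
    (hU : U ∈ Matrix.unitaryGroup (AIdx dR dB) ℂ)
    (E : Fin dE → Matrix (AIdx dR dB) (AIdx dR dB) ℂ)
    (hE : ∑ m : Fin dE, (E m)ᴴ * E m = 1) (i j : Fin dR) :
    ∑ m : Fin dE, Bf dR dB dE hB U E m m i j = if i = j then 1 else 0 := by
  have key : ∑ m : Fin dE, (E m * U)ᴴ * (E m * U) = 1 := by
    have h1 : ∀ m, (E m * U)ᴴ * (E m * U) = Uᴴ * ((E m)ᴴ * E m) * U := by
      intro m; rw [Matrix.conjTranspose_mul]; noncomm_ring
    simp_rw [h1]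
    rw [← Finset.sum_mul, ← Finset.mul_sum, hE, mul_one]
    rw [← Matrix.star_eq_conjTranspose]
    exact hU.1
  have h2 : ∀ m, Bf dR dB dE hB U E m m i j
      = ((E m * U)ᴴ * (E m * U)) (j, ⟨0, hB⟩) (i, ⟨0, hB⟩) := by
    intro m
    rw [Bf, Matrix.mul_apply]
    exact Finset.sum_congr rfl fun a _ => by
      rw [Matrix.conjTranspose_apply, colv, colv]; ring_nf; rfl
  simp_rw [h2]
  rw [← Matrix.sum_apply, key, Matrix.one_apply]
  by_cases h : i = j <;> simp [h, Prod.ext_iff, eq_comm]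

theorem trace_RE (hB : 1 ≤ dB) (U : Matrix (AIdx dR dB) (AIdx dR dB) ℂ)
    (E : Fin dE → Matrix (AIdx dR dB) (AIdx dR dB) ℂ) :
    (rhoRE dR dB dE hB U E * rhoRE dR dB dE hB U E).trace
      = ((dR : ℂ)⁻¹)^2 * ∑ i : Fin dR, ∑ m : Fin dE, ∑ j : Fin dR, ∑ n : Fin dE,
          Bf dR dB dE hB U E m n i j * Bf dR dB dE hB U E n m j i := by
  simp_rw [Matrix.trace, Matrix.diag_apply, Matrix.mul_apply, rhoRE_apply,
    Fintype.sum_prod_type, Finset.mul_sum]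
  refine Finset.sum_congr rfl fun i _ => Finset.sum_congr rfl fun m _ =>
    Finset.sum_congr rfl fun j _ => Finset.sum_congr rfl fun n _ => by ring

theorem rhoR_eq (hB : 1 ≤ dB) (U : Matrix (AIdx dR dB) (AIdx dR dB) ℂ)
    (hU : U ∈ Matrix.unitaryGroup (AIdx dR dB) ℂ)
    (E : Fin dE → Matrix (AIdx dR dB) (AIdx dR dB) ℂ)
    (hE : ∑ m : Fin dE, (E m)ᴴ * E m = 1) :
    rhoR dR dB dE hB U E = ((dR : ℂ))⁻¹ • (1 : Matrix (Fin dR) (Fin dR) ℂ) := by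
  ext i j
  show (∑ a : AIdx dR dB, ∑ m : Fin dE, _) = _
  rw [Finset.sum_comm]
  rw [Finset.sum_congr rfl fun m (_ : m ∈ Finset.univ) => pair_sum dR dB dE hB U E i j m m]
  rw [← Finset.mul_sum, Bf_sum dR dB dE hB U hU E hE i j]
  simp [Matrix.one_apply]

theorem trace_R (hB : 1 ≤ dB) (U : Matrix (AIdx dR dB) (AIdx dR dB) ℂ)
    (hU : U ∈ Matrix.unitaryGroup (AIdx dR dB) ℂ)
    (E : Fin dE → Matrix (AIdx dR dB) (AIdx dR dB) ℂ)
    (hE : ∑ m : Fin dE, (E m)ᴴ * E m = 1) :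
    (rhoR dR dB dE hB U E * rhoR dR dB dE hB U E).trace = ((dR : ℂ)⁻¹)^2 * (dR : ℂ) := by
  rw [rhoR_eq dR dB dE hB U hU E hE]
  rw [Matrix.smul_mul, Matrix.mul_smul, one_mul, smul_smul, Matrix.trace_smul,
    Matrix.trace_one]
  rw [Fintype.card_fin, smul_eq_mul]
  push_cast
  ring

theorem trace_E (hB : 1 ≤ dB) (U : Matrix (AIdx dR dB) (AIdx dR dB) ℂ)
    (E : Fin dE → Matrix (AIdx dR dB) (AIdx dR dB) ℂ) :
    (rhoE dR dB dE hB U E * rhoE dR dB dE hB U E).trace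
      = ((dR : ℂ)⁻¹)^2 * ∑ m : Fin dE, ∑ n : Fin dE,
          (∑ i : Fin dR, Bf dR dB dE hB U E m n i i)
            * (∑ j : Fin dR, Bf dR dB dE hB U E n m j j) := by
  simp_rw [Matrix.trace, Matrix.diag_apply, Matrix.mul_apply, rhoE_apply, Finset.mul_sum]
  refine Finset.sum_congr rfl fun m _ => Finset.sum_congr rfl fun n _ =>
    Finset.sum_congr rfl fun x _ => ?_
  rw [← Finset.mul_sum]
  ring

abbrev ZIdx (dR dB : ℕ) := ((AIdx dR dB × AIdx dR dB) × AIdx dR dB) × AIdx dR dB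

def tOne (hB : 1 ≤ dB) (i j : Fin dR) : ZIdx dR dB :=
  ((((i, ⟨0, hB⟩), (j, ⟨0, hB⟩)), (j, ⟨0, hB⟩)), (i, ⟨0, hB⟩))

def tTwo (hB : 1 ≤ dB) (i j : Fin dR) : ZIdx dR dB :=
  ((((i, ⟨0, hB⟩), (i, ⟨0, hB⟩)), (j, ⟨0, hB⟩)), (j, ⟨0, hB⟩))

theorem mulVec_vIn (hB : 1 ≤ dB) (G : Fin dE → Fin dE → Matrix (ZIdx dR dB) (ZIdx dR dB) ℂ)
    (z : ZIdx dR dB) :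
    ((∑ m : Fin dE, ∑ n : Fin dE, G m n) *ᵥ vIn dR dB hB) z
      = ∑ m : Fin dE, ∑ n : Fin dE, ∑ i : Fin dR, ∑ j : Fin dR,
          (G m n z (tOne dR dB hB i j) - ((dR : ℂ))⁻¹ * G m n z (tTwo dR dB hB i j)) := by
  show (∑ x : ZIdx dR dB, (∑ m : Fin dE, ∑ n : Fin dE, G m n) z x * vIn dR dB hB x) = _
  simp only [Matrix.sum_apply, vIn]
  simp_rw [Finset.sum_mul, Finset.mul_sum]
  rw [Finset.sum_comm]
  refine Finset.sum_congr rfl fun m _ => ?_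
  rw [Finset.sum_comm]
  refine Finset.sum_congr rfl fun n _ => ?_
  rw [Finset.sum_comm]
  refine Finset.sum_congr rfl fun i _ => ?_
  rw [Finset.sum_comm]
  refine Finset.sum_congr rfl fun j _ => ?_
  rw [tOne, tTwo]
  simp [mul_sub, mul_ite, mul_one, mul_zero, Finset.sum_sub_distrib, Finset.sum_ite_eq',
    mul_comm]

theorem sc3 {α β γ M : Type*} [Fintype α] [Fintype β] [Fintype γ] [AddCommMonoid M]
    (f : α → β → γ → M) :
    ∑ a : α, ∑ b : β, ∑ c : γ, f a b c = ∑ c : γ, ∑ a : α, ∑ b : β, f a b c := by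
  have h : ∀ a : α, ∑ b : β, ∑ c : γ, f a b c = ∑ c : γ, ∑ b : β, f a b c :=
    fun a => Finset.sum_comm
  simp_rw [h]
  exact Finset.sum_comm

theorem sc6 {α β γ δ ε ζ M : Type*} [Fintype α] [Fintype β] [Fintype γ] [Fintype δ]
    [Fintype ε] [Fintype ζ] [AddCommMonoid M] (f : α → β → γ → δ → ε → ζ → M) :
    ∑ p : α, ∑ q : β, ∑ m : γ, ∑ n : δ, ∑ i : ε, ∑ j : ζ, f p q m n i j
      = ∑ m : γ, ∑ n : δ, ∑ i : ε, ∑ j : ζ, ∑ p : α, ∑ q : β, f p q m n i j := by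
  rw [sc3 (f := fun p q m => ∑ n, ∑ i, ∑ j, f p q m n i j)]
  refine Finset.sum_congr rfl fun m _ => ?_
  rw [sc3 (f := fun p q n => ∑ i, ∑ j, f p q m n i j)]
  refine Finset.sum_congr rfl fun n _ => ?_
  rw [sc3 (f := fun p q i => ∑ j, f p q m n i j)]
  refine Finset.sum_congr rfl fun i _ => ?_
  exact sc3 (fun p q j => f p q m n i j)

theorem expand4 (c : ℂ) (X Y X' Y' : AIdx dR dB → ℂ) :
    (∑ p : AIdx dR dB, X p) * (∑ q : AIdx dR dB, Y q) -
        c * ((∑ p : AIdx dR dB, X' p) * (∑ q : AIdx dR dB, Y' q))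
      = ∑ p : AIdx dR dB, ∑ q : AIdx dR dB, (X p * Y q - c * (X' p * Y' q)) := by
  simp_rw [Finset.sum_mul_sum, Finset.mul_sum, ← Finset.sum_sub_distrib]

theorem rhs_eq (hB : 1 ≤ dB) (U : Matrix (AIdx dR dB) (AIdx dR dB) ℂ)
    (E : Fin dE → Matrix (AIdx dR dB) (AIdx dR dB) ℂ) :
    (∑ p : AIdx dR dB, ∑ q : AIdx dR dB,
        (((∑ m : Fin dE, ∑ n : Fin dE,
              E m ⊗ₖ (E n).map (starRingEnd ℂ) ⊗ₖ E n ⊗ₖ (E m).map (starRingEnd ℂ)) *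
            (U ⊗ₖ U.map (starRingEnd ℂ) ⊗ₖ U ⊗ₖ U.map (starRingEnd ℂ))).mulVec
          (vIn dR dB hB)) (((p, p), q), q))
      = ∑ m : Fin dE, ∑ n : Fin dE, ∑ i : Fin dR, ∑ j : Fin dR,
          (Bf dR dB dE hB U E m n i j * Bf dR dB dE hB U E n m j i -
            ((dR : ℂ))⁻¹ * (Bf dR dB dE hB U E m n i i * Bf dR dB dE hB U E n m j j)) := by
  have hKV : (∑ m : Fin dE, ∑ n : Fin dE,
          E m ⊗ₖ (E n).map (starRingEnd ℂ) ⊗ₖ E n ⊗ₖ (E m).map (starRingEnd ℂ)) *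
        (U ⊗ₖ U.map (starRingEnd ℂ) ⊗ₖ U ⊗ₖ U.map (starRingEnd ℂ))
      = ∑ m : Fin dE, ∑ n : Fin dE,
          (E m * U) ⊗ₖ ((E n * U).map (starRingEnd ℂ)) ⊗ₖ (E n * U) ⊗ₖ
            ((E m * U).map (starRingEnd ℂ)) := by
    rw [Finset.sum_mul]
    refine Finset.sum_congr rfl fun m _ => ?_
    rw [Finset.sum_mul]
    refine Finset.sum_congr rfl fun n _ => ?_
    simp only [← Matrix.mul_kronecker_mul, ← Matrix.map_mul]
  rw [hKV]
  simp_rw [mulVec_vIn]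
  rw [sc6 (f := fun p q m n i j =>
    ((E m * U) ⊗ₖ ((E n * U).map (starRingEnd ℂ)) ⊗ₖ (E n * U) ⊗ₖ
        ((E m * U).map (starRingEnd ℂ))) (((p, p), q), q) (tOne dR dB hB i j) -
      ((dR : ℂ))⁻¹ *
        ((E m * U) ⊗ₖ ((E n * U).map (starRingEnd ℂ)) ⊗ₖ (E n * U) ⊗ₖ
            ((E m * U).map (starRingEnd ℂ))) (((p, p), q), q) (tTwo dR dB hB i j))]
  refine Finset.sum_congr rfl fun m _ => Finset.sum_congr rfl fun n _ =>
    Finset.sum_congr rfl fun i _ => Finset.sum_congr rfl fun j _ => ?_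
  rw [Bf, Bf, Bf, Bf, expand4]
  refine Finset.sum_congr rfl fun p _ => Finset.sum_congr rfl fun q _ => ?_
  simp only [tOne, tTwo, Matrix.kroneckerMap_apply, Matrix.map_apply, colv]
  ring

theorem sc4 {α β γ δ M : Type*} [Fintype α] [Fintype β] [Fintype γ] [Fintype δ]
    [AddCommMonoid M] (f : α → β → γ → δ → M) :
    ∑ i : α, ∑ m : β, ∑ j : γ, ∑ n : δ, f i m j n
      = ∑ m : β, ∑ n : δ, ∑ i : α, ∑ j : γ, f i m j n := by
  rw [Finset.sum_comm]
  exact Finset.sum_congr rfl fun m _ => sc3 (fun i j n => f i m j n)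

theorem stmt16' (hB : 1 ≤ dB) (U : Matrix (AIdx dR dB) (AIdx dR dB) ℂ)
    (hU : U ∈ Matrix.unitaryGroup (AIdx dR dB) ℂ)
    (E : Fin dE → Matrix (AIdx dR dB) (AIdx dR dB) ℂ)
    (hE : ∑ m : Fin dE, (E m)ᴴ * E m = 1) :
    (rhoRE dR dB dE hB U E * rhoRE dR dB dE hB U E).trace -
        (rhoR dR dB dE hB U E * rhoR dR dB dE hB U E).trace *
          (rhoE dR dB dE hB U E * rhoE dR dB dE hB U E).trace =
      ((dR : ℂ) ^ 2)⁻¹ *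
        ∑ p : AIdx dR dB, ∑ q : AIdx dR dB,
          (((∑ m : Fin dE, ∑ n : Fin dE,
                E m ⊗ₖ (E n).map (starRingEnd ℂ) ⊗ₖ E n ⊗ₖ (E m).map (starRingEnd ℂ)) *
              (U ⊗ₖ U.map (starRingEnd ℂ) ⊗ₖ U ⊗ₖ U.map (starRingEnd ℂ))).mulVec
            (vIn dR dB hB)) (((p, p), q), q) := by
  rw [trace_RE dR dB dE hB U E, trace_R dR dB dE hB U hU E hE, trace_E dR dB dE hB U E,
    rhs_eq dR dB dE hB U E]
  rw [sc4 (f := fun i m j n => Bf dR dB dE hB U E m n i j * Bf dR dB dE hB U E n m j i)]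
  have hsplit : (∑ m : Fin dE, ∑ n : Fin dE, ∑ i : Fin dR, ∑ j : Fin dR,
        (Bf dR dB dE hB U E m n i j * Bf dR dB dE hB U E n m j i -
          ((dR : ℂ))⁻¹ * (Bf dR dB dE hB U E m n i i * Bf dR dB dE hB U E n m j j)))
      = (∑ m : Fin dE, ∑ n : Fin dE, ∑ i : Fin dR, ∑ j : Fin dR,
          Bf dR dB dE hB U E m n i j * Bf dR dB dE hB U E n m j i)
        - ((dR : ℂ))⁻¹ * (∑ m : Fin dE, ∑ n : Fin dE,
            (∑ i : Fin dR, Bf dR dB dE hB U E m n i i) *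
              (∑ j : Fin dR, Bf dR dB dE hB U E n m j j)) := by
    simp_rw [Finset.sum_sub_distrib, Finset.sum_mul_sum, Finset.mul_sum]
  rw [hsplit]
  set S1 := (∑ m : Fin dE, ∑ n : Fin dE, ∑ i : Fin dR, ∑ j : Fin dR,
      Bf dR dB dE hB U E m n i j * Bf dR dB dE hB U E n m j i) with hS1
  set C1 := (∑ m : Fin dE, ∑ n : Fin dE,
      (∑ i : Fin dR, Bf dR dB dE hB U E m n i i) *
        (∑ j : Fin dR, Bf dR dB dE hB U E n m j j)) with hC1
  obtain h0 | h0 := eq_or_ne (dR : ℂ) 0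
  · simp [h0]
  · field_simp

/-- for a unitary `U` on `ℂ^{d_A}` (`d_A = d_R·d_B`) and Kraus operators
`{E_m}` with `Σ_m E_m†E_m = 1`, the mutual purity of
`|Ψ'⟩ = (1/√d_R) Σ_{i,m} |i⟩⊗(E_m|φ_i⟩)⊗|m⟩`, `|φ_i⟩ = U(|i⟩⊗|0⟩)`, satisfies
`Tr(ρ'_{RE}²) − Tr(ρ'_R²)·Tr(ρ'_E²)
  = (1/d_R²) ⟨I_{d_A}, (Σ_{m,n} E_m⊗Ē_n⊗E_n⊗Ē_m)(U⊗Ū⊗U⊗Ū) v⟩`,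
where `⟨I_{d_A}, w⟩ = Σ_{p,q} w(p,p,q,q)`. -/
theorem stmt16 (hB : 1 ≤ dB) (U : Matrix (AIdx dR dB) (AIdx dR dB) ℂ)
    (hU : U ∈ Matrix.unitaryGroup (AIdx dR dB) ℂ)
    (E : Fin dE → Matrix (AIdx dR dB) (AIdx dR dB) ℂ)
    (hE : ∑ m : Fin dE, (E m)ᴴ * E m = 1) :
    (rhoRE dR dB dE hB U E * rhoRE dR dB dE hB U E).trace -
        (rhoR dR dB dE hB U E * rhoR dR dB dE hB U E).trace *
          (rhoE dR dB dE hB U E * rhoE dR dB dE hB U E).trace =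
      ((dR : ℂ) ^ 2)⁻¹ *
        ∑ p : AIdx dR dB, ∑ q : AIdx dR dB,
          (((∑ m : Fin dE, ∑ n : Fin dE,
                E m ⊗ₖ (E n).map (starRingEnd ℂ) ⊗ₖ E n ⊗ₖ (E m).map (starRingEnd ℂ)) *
              (U ⊗ₖ U.map (starRingEnd ℂ) ⊗ₖ U ⊗ₖ U.map (starRingEnd ℂ))).mulVec
            (vIn dR dB hB)) (((p, p), q), q) := by
  exact stmt16' dR dB dE hB U hU E hE

end
end
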